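/- arXiv:2010.10760 — 2 statements merged into one kernel-verified Lean document; each statement's English description precedes it below -/
import Mathlib

section
/- Corollary 2.1(c) (band-limited window). Fix t ∈ ℝ. Suppose x ∈ 𝓑_{ε1,ε2}, supp(ĝ) ⊆ [−α, α], the separation condition σ(t) ≥ 2α/(φ'_k(t) − φ'_{k−1}(t)) holds for all t and k = 1,…,K, and 2M(t)λ_0(t) ≤ μ(t). Let ε̃1 satisfy M(t)λ_0(t) ≤ ε̃1 ≤ μ(t) − M(t)λ_0(t); let η̂_0 = 0 and η̂_ℓ(t) = argmax_{η ∈ 𝓖_{t,ℓ}} |Ṽ_x(t,η)| for 1 ≤ ℓ ≤ K. Then for each ℓ = 0,1,…,K, |Ṽ_x(t, η̂_ℓ) − x_ℓ(t)| ≤ M(t)λ_0(t) + 2π I_1 A_ℓ(t) · |ĝ|^{−1}(1 − 2 M(t)λ_0(t)/A_ℓ(t)). -/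
open MeasureTheory Real

set_option maxHeartbeats 2000000
noncomputable section

/-- The adaptive short-time Fourier transform with time-varying window width `σ`. -/
def aSTFT (x : ℝ → ℂ) (g : ℝ → ℝ) (σ : ℝ → ℝ) (t η : ℝ) : ℂ :=
  ∫ τ : ℝ, x (t + τ) * (((σ t)⁻¹ * g (τ / σ t) : ℝ) : ℂ) *
    Complex.exp (-(2 * (π : ℂ) * η * τ) * Complex.I)

/-- The Fourier transform `ĝ` of the window `g`. -/
def hatg (g : ℝ → ℝ) (ξ : ℝ) : ℂ :=
  ∫ τ : ℝ, (g τ : ℂ) * Complex.exp (-(2 * (π : ℂ) * ξ * τ) * Complex.I)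

/-- The absolute moments `I_n = ∫ |τ^n g(τ)| dτ` of the window. -/
def momentI (g : ℝ → ℝ) (n : ℕ) : ℝ := ∫ τ : ℝ, |τ| ^ n * |g τ|

/-- The `k`-th component `x_k(s) = A_k(s) e^{2πi φ_k(s)}`. -/
def xcomp (A φ : ℕ → ℝ → ℝ) (k : ℕ) (s : ℝ) : ℂ :=
  (A k s : ℂ) * Complex.exp ((2 * (π : ℂ) * φ k s) * Complex.I)

/-- `M(t) = Σ_{k=0}^K A_k(t)`. -/
def Msum (K : ℕ) (A : ℕ → ℝ → ℝ) (t : ℝ) : ℝ := ∑ k ∈ Finset.range (K + 1), A k t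

/-- `μ(t) = min_{0 ≤ k ≤ K} A_k(t)`. -/
def muMin (K : ℕ) (A : ℕ → ℝ → ℝ) (t : ℝ) : ℝ :=
  (Finset.range (K + 1)).inf' (by simp) fun k => A k t

/-- `λ_0(t) = ε1 I_1 σ(t) + π ε2 I_2 σ(t)²`. -/
def lam0 (g : ℝ → ℝ) (σ : ℝ → ℝ) (ε1 ε2 t : ℝ) : ℝ :=
  ε1 * momentI g 1 * σ t + π * ε2 * momentI g 2 * σ t ^ 2

/-- `err_ℓ(t) = M(t)λ_0(t) + Σ_{k≠ℓ} A_k(t) |ĝ(α(2|ℓ−k|−1))|`. -/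
def errl (K : ℕ) (A : ℕ → ℝ → ℝ) (g : ℝ → ℝ) (σ : ℝ → ℝ) (α ε1 ε2 : ℝ)
    (l : ℕ) (t : ℝ) : ℝ :=
  Msum K A t * lam0 g σ ε1 ε2 t +
    ∑ k ∈ (Finset.range (K + 1)).erase l,
      A k t * ‖hatg g (α * (2 * |(l : ℝ) - (k : ℝ)| - 1))‖

/-- `𝓖_t = {η : |Ṽ_x(t,η)| > ε̃1}`. -/
def Gt (x : ℝ → ℂ) (g : ℝ → ℝ) (σ : ℝ → ℝ) (t eps : ℝ) : Set ℝ :=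
  {η | eps < ‖aSTFT x g σ t η‖}

/-- `𝓖_{t,k} = {η ∈ 𝓖_t : |η − φ'_k(t)| < α/σ(t)}`. -/
def Gtk (x : ℝ → ℂ) (g : ℝ → ℝ) (σ : ℝ → ℝ) (φ : ℕ → ℝ → ℝ) (α t eps : ℝ)
    (k : ℕ) : Set ℝ :=
  {η | η ∈ Gt x g σ t eps ∧ |η - deriv (φ k) t| < α / σ t}


lemma hasDerivAt_expI (s : ℝ) :
    HasDerivAt (fun u : ℝ => Complex.exp (u * Complex.I)) (Complex.exp (s * Complex.I) * Complex.I) s := by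
  have h : HasDerivAt (fun z : ℂ => Complex.exp (z * Complex.I))
      (Complex.exp ((s : ℂ) * Complex.I) * Complex.I) (s : ℂ) := by
    have h0 := (Complex.hasDerivAt_exp ((s : ℂ) * Complex.I)).comp (s : ℂ)
      ((hasDerivAt_id (s : ℂ)).mul_const Complex.I)
    simp only [id, one_mul] at h0
    exact h0
  exact h.comp_ofReal

lemma norm_expI_sub_expI (a b : ℝ) :
    ‖Complex.exp (a * Complex.I) - Complex.exp (b * Complex.I)‖ ≤ |a - b| := by
  have H := Convex.norm_image_sub_le_of_norm_hasDerivWithin_le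
    (f := fun u : ℝ => Complex.exp (u * Complex.I))
    (f' := fun u : ℝ => Complex.exp (u * Complex.I) * Complex.I) (C := 1) (s := Set.univ)
    (fun x _ => (hasDerivAt_expI x).hasDerivWithinAt)
    (fun x _ => by simp [Complex.norm_exp]) convex_univ (Set.mem_univ b) (Set.mem_univ a)
  simpa [Real.norm_eq_abs] using H

lemma quad_taylor (f : ℝ → ℝ) (hf : ContDiff ℝ 2 f) (c : ℝ) (hc : 0 ≤ c)
    (hbd : ∀ s, |deriv (deriv f) s| ≤ c) (t τ : ℝ) :
    |f (t + τ) - f t - deriv f t * τ| ≤ c * τ ^ 2 / 2 := by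
  have hf2 : ContDiff ℝ ((1 : ℕ) + 1) f := by exact_mod_cast hf
  have hdiff : Differentiable ℝ f := (contDiff_succ_iff_deriv.mp hf2).1
  have hdf : ContDiff ℝ 1 (deriv f) := (contDiff_succ_iff_deriv.mp hf2).2.2
  have hdf' : Differentiable ℝ (deriv f) := hdf.differentiable one_ne_zero
  have hlip : ∀ a b : ℝ, |deriv f a - deriv f b| ≤ c * |a - b| := by
    intro a b
    have H := Convex.norm_image_sub_le_of_norm_hasDerivWithin_le
      (f := deriv f) (f' := deriv (deriv f)) (C := c) (s := Set.univ)
      (fun x _ => (hdf' x).hasDerivAt.hasDerivWithinAt)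
      (fun x _ => by simpa [Real.norm_eq_abs] using hbd x) convex_univ
      (Set.mem_univ b) (Set.mem_univ a)
    simpa [Real.norm_eq_abs] using H
  set G : ℝ → ℝ := fun s => deriv f (t + s) - deriv f t with hG
  have hGd : ∀ s, HasDerivAt (fun u : ℝ => f (t + u) - f t - deriv f t * u) (G s) s := by
    intro s
    have h1 : HasDerivAt (fun u : ℝ => f (t + u)) (deriv f (t + s)) s := by
      have h0 := (HasDerivAt.comp s (hdiff (t + s)).hasDerivAt ((hasDerivAt_id s).const_add t))
      rw [mul_one] at h0
      exact h0
    have h2 : HasDerivAt (fun u : ℝ => deriv f t * u) (deriv f t) s := by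
      simpa using (hasDerivAt_id s).const_mul (deriv f t)
    exact (h1.sub_const (f t)).sub h2
  have hGcont : Continuous G :=
    ((hdf.continuous.comp (continuous_const.add continuous_id)).sub continuous_const)
  have hftc : ∫ s in (0:ℝ)..τ, G s = f (t + τ) - f t - deriv f t * τ := by
    have := intervalIntegral.integral_eq_sub_of_hasDerivAt (f' := G)
      (f := fun u : ℝ => f (t + u) - f t - deriv f t * u)
      (fun x _ => hGd x) (hGcont.intervalIntegrable 0 τ)
    simpa using this
  have hGb : ∀ s, |G s| ≤ c * |s| := by
    intro s
    simpa using hlip (t + s) t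
  rw [← hftc]
  rcases le_total 0 τ with hτ | hτ
  · calc ‖∫ s in (0:ℝ)..τ, G s‖ ≤ ∫ s in (0:ℝ)..τ, ‖G s‖ :=
          intervalIntegral.norm_integral_le_integral_norm hτ
    _ ≤ ∫ s in (0:ℝ)..τ, c * s := by
        apply intervalIntegral.integral_mono_on hτ
          (hGcont.norm.intervalIntegrable 0 τ)
          ((continuous_const.mul continuous_id).intervalIntegrable 0 τ)
        intro x hx
        have := hGb x
        rwa [Real.norm_eq_abs, abs_of_nonneg hx.1] at *
        
    _ = c * τ ^ 2 / 2 := by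
        rw [intervalIntegral.integral_const_mul, integral_id]; ring
  · have h1 : ‖∫ s in (0:ℝ)..τ, G s‖ = ‖∫ s in τ..(0:ℝ), G s‖ := by
      rw [intervalIntegral.integral_symm]; simp
    calc ‖∫ s in (0:ℝ)..τ, G s‖ = ‖∫ s in τ..(0:ℝ), G s‖ := h1
    _ ≤ ∫ s in τ..(0:ℝ), ‖G s‖ :=
          intervalIntegral.norm_integral_le_integral_norm hτ
    _ ≤ ∫ s in τ..(0:ℝ), c * (-s) := by
        apply intervalIntegral.integral_mono_on hτ
          (hGcont.norm.intervalIntegrable τ 0)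
          ((continuous_const.mul continuous_id.neg).intervalIntegrable τ 0)
        intro x hx
        have := hGb x
        rwa [Real.norm_eq_abs, abs_of_nonpos hx.2] at *
    _ = c * τ ^ 2 / 2 := by
        rw [intervalIntegral.integral_const_mul]
        have : ∫ s in τ..(0:ℝ), (-s) = -((0:ℝ) ^ 2 - τ ^ 2) / 2 := by
          rw [intervalIntegral.integral_neg, integral_id]; ring
        rw [this]; ring


lemma expI_arg (c : ℝ) : -(2 * (π : ℂ) * c) * Complex.I = ((-(2 * π * c) : ℝ) : ℂ) * Complex.I := by
  push_cast; ring

lemma char_integrable (g : ℝ → ℝ) (hgint : Integrable g) (ξ : ℝ) :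
    Integrable (fun τ : ℝ => (g τ : ℂ) * Complex.exp (-(2 * (π : ℂ) * ξ * τ) * Complex.I)) := by
  have h1 : Integrable (fun τ : ℝ => (g τ : ℂ)) := hgint.ofReal
  have := h1.bdd_mul (f := fun τ : ℝ => Complex.exp (-(2 * (π : ℂ) * ξ * τ) * Complex.I)) (c := 1)
    (Complex.continuous_exp.comp (by continuity)).aestronglyMeasurable
    (Filter.Eventually.of_forall fun τ => by
      simp [Complex.norm_exp])
  simpa [mul_comm] using this

lemma momentI_nonneg (g : ℝ → ℝ) (n : ℕ) : 0 ≤ momentI g n :=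
  integral_nonneg fun τ => by positivity

lemma hatg_lip (g : ℝ → ℝ) (hgint : Integrable g)
    (hgI1 : Integrable fun τ : ℝ => τ * g τ) (ξ1 ξ2 : ℝ) :
    ‖hatg g ξ1 - hatg g ξ2‖ ≤ 2 * π * momentI g 1 * |ξ1 - ξ2| := by
  have habs : Integrable (fun τ : ℝ => |τ| ^ (1:ℕ) * |g τ|) := by
    have h := hgI1.abs
    apply h.congr
    filter_upwards with τ
    rw [abs_mul, pow_one, mul_comm]
  rw [hatg, hatg, ← integral_sub (char_integrable g hgint ξ1) (char_integrable g hgint ξ2)]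
  have hbound : Integrable (fun τ : ℝ => 2 * π * |ξ1 - ξ2| * (|τ| ^ (1:ℕ) * |g τ|)) :=
    habs.const_mul _
  refine (norm_integral_le_of_norm_le (f := fun τ : ℝ =>
      (g τ : ℂ) * Complex.exp (-(2 * (π : ℂ) * ξ1 * τ) * Complex.I) -
      (g τ : ℂ) * Complex.exp (-(2 * (π : ℂ) * ξ2 * τ) * Complex.I)) hbound ?_).trans ?_
  swap
  · rw [MeasureTheory.integral_const_mul]
    have h4 : momentI g 1 = ∫ τ : ℝ, |τ| ^ (1:ℕ) * |g τ| := rfl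
    rw [h4]; ring_nf; exact le_rfl
  · filter_upwards with τ
    have h1 : (g τ : ℂ) * Complex.exp (-(2 * (π : ℂ) * ξ1 * τ) * Complex.I) -
        (g τ : ℂ) * Complex.exp (-(2 * (π : ℂ) * ξ2 * τ) * Complex.I) =
        (g τ : ℂ) * (Complex.exp (((-(2 * π * ξ1 * τ) : ℝ) : ℂ) * Complex.I) -
          Complex.exp (((-(2 * π * ξ2 * τ) : ℝ) : ℂ) * Complex.I)) := by
      push_cast; ring
    rw [h1, norm_mul, Complex.norm_real]
    have h2 := norm_expI_sub_expI (-(2 * π * ξ1 * τ)) (-(2 * π * ξ2 * τ))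
    have h3 : |(-(2 * π * ξ1 * τ)) - (-(2 * π * ξ2 * τ))| = 2 * π * |ξ1 - ξ2| * |τ| := by
      rw [show (-(2 * π * ξ1 * τ)) - (-(2 * π * ξ2 * τ)) = 2 * π * ((ξ2 - ξ1) * τ) by ring,
        abs_mul (2 * π) ((ξ2 - ξ1) * τ),
        abs_of_nonneg (by positivity : (0:ℝ) ≤ 2 * π),
        abs_mul, abs_sub_comm]
      ring
    calc ‖g τ‖ * ‖_‖ ≤ |g τ| * (2 * π * |ξ1 - ξ2| * |τ|) := by
          rw [Real.norm_eq_abs]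
          exact mul_le_mul_of_nonneg_left (h2.trans_eq h3) (abs_nonneg _)
    _ = 2 * π * |ξ1 - ξ2| * (|τ| ^ (1:ℕ) * |g τ|) := by rw [pow_one]; ring

lemma hatg_zero (g : ℝ → ℝ) (hgnorm : (∫ τ : ℝ, g τ) = 1) : hatg g 0 = 1 := by
  rw [hatg]
  have h : ∀ τ : ℝ, -(2 * (π : ℂ) * ((0:ℝ):ℂ) * τ) * Complex.I = 0 := fun τ => by simp
  simp only [h, Complex.exp_zero, mul_one]
  have : (∫ τ : ℝ, ((g τ : ℝ) : ℂ)) = ((∫ τ : ℝ, g τ : ℝ) : ℂ) := by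
    exact integral_ofReal
  rw [this, hgnorm, Complex.ofReal_one]


lemma scaled_fourier (g : ℝ → ℝ) (σt : ℝ) (hσt : 0 < σt) (ω : ℝ) :
    ∫ τ : ℝ, (((σt⁻¹ * g (τ / σt) : ℝ)) : ℂ) * Complex.exp (-(2 * (π : ℂ) * ω * τ) * Complex.I)
      = hatg g (σt * ω) := by
  have hne : (σt : ℝ) ≠ 0 := hσt.ne'
  set G : ℝ → ℂ := fun u => (g u : ℂ) * Complex.exp (-(2 * (π : ℂ) * ((σt * ω : ℝ) : ℂ) * u) * Complex.I)
    with hGdef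
  have key : ∀ τ : ℝ, (((σt⁻¹ * g (τ / σt) : ℝ)) : ℂ) *
      Complex.exp (-(2 * (π : ℂ) * ω * τ) * Complex.I) = (σt⁻¹ : ℂ) * G (τ / σt) := by
    intro τ
    have e1 : -(2 * (π : ℂ) * ω * τ) * Complex.I
        = -(2 * (π : ℂ) * ((σt * ω : ℝ) : ℂ) * ((τ / σt : ℝ) : ℂ)) * Complex.I := by
      have hc : (σt : ℂ) ≠ 0 := by exact_mod_cast hne
      push_cast
      field_simp
    rw [e1, hGdef]
    push_cast
    ring
  calc (∫ τ : ℝ, (((σt⁻¹ * g (τ / σt) : ℝ)) : ℂ) *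
        Complex.exp (-(2 * (π : ℂ) * ω * τ) * Complex.I))
      = ∫ τ : ℝ, (σt⁻¹ : ℂ) * G (τ / σt) := integral_congr_ae (Filter.Eventually.of_forall key)
    _ = (σt⁻¹ : ℂ) * ∫ τ : ℝ, G (τ / σt) := MeasureTheory.integral_const_mul _ _
    _ = (σt⁻¹ : ℂ) * ((|σt| : ℝ) • ∫ u, G u) := by
        rw [MeasureTheory.Measure.integral_comp_div G σt]
    _ = hatg g (σt * ω) := by
        rw [abs_of_pos hσt, Complex.real_smul, ← mul_assoc,
          inv_mul_cancel₀ (show (σt:ℂ) ≠ 0 by exact_mod_cast hne), one_mul]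
        rfl

lemma moment_scaled (g : ℝ → ℝ) (n : ℕ)
    (hInt : Integrable fun u : ℝ => |u| ^ n * |g u|) (σt : ℝ) (hσt : 0 < σt) :
    (∫ τ : ℝ, |τ| ^ n * (σt⁻¹ * |g (τ / σt)|)) = σt ^ n * momentI g n ∧
    Integrable (fun τ : ℝ => |τ| ^ n * (σt⁻¹ * |g (τ / σt)|)) := by
  have hne : σt ≠ 0 := hσt.ne'
  have key : ∀ τ : ℝ, |τ| ^ n * (σt⁻¹ * |g (τ / σt)|)
      = (σt⁻¹ * σt ^ n) * (|τ / σt| ^ n * |g (τ / σt)|) := by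
    intro τ
    have h1 : |τ| = σt * |τ / σt| := by
      rw [abs_div, abs_of_pos hσt]
      field_simp
    rw [h1, mul_pow]
    ring
  constructor
  · rw [funext key, MeasureTheory.integral_const_mul,
      MeasureTheory.Measure.integral_comp_div (fun u : ℝ => |u| ^ n * |g u|) σt]
    rw [abs_of_pos hσt, smul_eq_mul]
    rw [momentI]
    field_simp
  · have := (hInt.comp_div hne).const_mul (σt⁻¹ * σt ^ n)
    exact this.congr (by filter_upwards with τ; rw [key τ])

lemma norm_xcomp (A φ : ℕ → ℝ → ℝ) (k : ℕ) (s : ℝ) : ‖xcomp A φ k s‖ = |A k s| := by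
  rw [xcomp, norm_mul, Complex.norm_real]
  have h : (2 * (π : ℂ) * (φ k s : ℂ)) * Complex.I = ((2 * π * φ k s : ℝ) : ℂ) * Complex.I := by
    push_cast; ring
  rw [h, Complex.norm_exp_ofReal_mul_I, mul_one, Real.norm_eq_abs]

theorem key_approx (K : ℕ) (A φ : ℕ → ℝ → ℝ) (ε1 ε2 : ℝ) (x : ℝ → ℂ)
    (g : ℝ → ℝ) (σ : ℝ → ℝ) (t : ℝ)
    (hε1 : 0 < ε1) (hε2 : 0 < ε2)
    (hAreg : ∀ k ≤ K, ContDiff ℝ 1 (A k))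
    (hAbdd : ∀ k ≤ K, ∃ C, ∀ s, |A k s| ≤ C)
    (hφreg : ∀ k ≤ K, ContDiff ℝ 2 (φ k))
    (hφ0 : ∀ s, φ 0 s = 0)
    (hApos : ∀ k ≤ K, ∀ s, 0 < A k s)
    (hAlip : ∀ k ≤ K, ∀ s τ, |A k (s + τ) - A k s| ≤ ε1 * |τ| * A k s)
    (hφ'' : ∀ k, 1 ≤ k → k ≤ K → ∀ s, |deriv (deriv (φ k)) s| ≤ ε2)
    (hx : ∀ s, x s = ∑ k ∈ Finset.range (K + 1), xcomp A φ k s)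
    (hgint : Integrable g)
    (hgI1 : Integrable fun τ : ℝ => τ * g τ)
    (hgI2 : Integrable fun τ : ℝ => τ ^ 2 * g τ)
    (hσ : ∀ s, 0 < σ s)
    (htay : ∀ k ≤ K, ∀ τ : ℝ, |φ k (t + τ) - φ k t - deriv (φ k) t * τ| ≤ ε2 * τ ^ 2 / 2)
    (η : ℝ) :
    ‖aSTFT x g σ t η - ∑ k ∈ Finset.range (K + 1),
        xcomp A φ k t * hatg g (σ t * (η - deriv (φ k) t))‖ ≤
      Msum K A t * lam0 g σ ε1 ε2 t := by
  have hσt : 0 < σ t := hσ t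
  have habs1 : Integrable (fun u : ℝ => |u| ^ (1:ℕ) * |g u|) := by
    apply hgI1.abs.congr
    filter_upwards with τ
    rw [abs_mul, pow_one, mul_comm]
  have habs2 : Integrable (fun u : ℝ => |u| ^ (2:ℕ) * |g u|) := by
    apply hgI2.abs.congr
    filter_upwards with τ
    simp [abs_mul, abs_pow, sq_abs]
  obtain ⟨hm1, hint1⟩ := moment_scaled g 1 habs1 (σ t) hσt
  obtain ⟨hm2, hint2⟩ := moment_scaled g 2 habs2 (σ t) hσt
  -- window and phase functions
  set w : ℝ → ℂ := fun τ => (((σ t)⁻¹ * g (τ / σ t) : ℝ) : ℂ) with hw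
  set E : ℝ → ℂ := fun τ => Complex.exp (-(2 * (π : ℂ) * η * τ) * Complex.I) with hE
  have hwint : Integrable w := ((hgint.comp_div hσt.ne').const_mul ((σ t)⁻¹)).ofReal
  have hnormwE : ∀ τ : ℝ, ‖w τ * E τ‖ = (σ t)⁻¹ * |g (τ / σ t)| := by
    intro τ
    simp only [hw, hE, norm_mul]
    have h1 : -(2 * (π : ℂ) * η * τ) * Complex.I = ((-(2 * π * η * τ) : ℝ) : ℂ) * Complex.I := by
      push_cast; ring
    rw [h1]
    simp [Complex.norm_exp, abs_mul,
      abs_of_pos hσt, abs_of_pos (inv_pos.mpr hσt)]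
  have hwEint : Integrable (fun τ => w τ * E τ) := by
    refine (hwint.bdd_mul (f := E) (c := 1) ?_ (Filter.Eventually.of_forall fun τ => ?_)).congr
      (Filter.Eventually.of_forall fun τ => mul_comm _ _)
    · exact (Complex.continuous_exp.comp (by continuity)).aestronglyMeasurable
    · simp [hE, Complex.norm_exp]
  have hxcont : ∀ k ≤ K, Continuous (fun s => xcomp A φ k s) := by
    intro k hk
    have hA := (hAreg k hk).continuous
    have hφc := (hφreg k hk).continuous
    exact (Complex.continuous_ofReal.comp hA).mul
      (Complex.continuous_exp.comp
        ((continuous_const.mul (Complex.continuous_ofReal.comp hφc)).mul continuous_const))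
  -- the two families
  set p : ℕ → ℝ → ℂ := fun k τ => xcomp A φ k (t + τ) * (w τ * E τ) with hp
  set q : ℕ → ℝ → ℂ := fun k τ =>
    xcomp A φ k t * (w τ * Complex.exp (-(2 * (π : ℂ) * ((η - deriv (φ k) t : ℝ) : ℂ) * τ)
      * Complex.I)) with hq
  have hpint : ∀ k ≤ K, Integrable (p k) := by
    intro k hk
    obtain ⟨C, hC⟩ := hAbdd k hk
    refine (hwEint.bdd_mul (f := fun τ => xcomp A φ k (t + τ)) (c := C) ?_ (Filter.Eventually.of_forall fun τ => ?_)).congr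
      (Filter.Eventually.of_forall fun τ => rfl)
    · exact ((hxcont k hk).comp (continuous_const.add continuous_id)).aestronglyMeasurable
    · rw [norm_xcomp]; exact hC _
  have hrint : ∀ k : ℕ, Integrable (fun τ => w τ *
      Complex.exp (-(2 * (π : ℂ) * ((η - deriv (φ k) t : ℝ) : ℂ) * τ) * Complex.I)) := by
    intro k
    refine (hwint.bdd_mul (c := 1) ?_ (Filter.Eventually.of_forall fun τ => ?_)).congr
      (Filter.Eventually.of_forall fun τ => mul_comm _ _)
    · exact (Complex.continuous_exp.comp (by continuity)).aestronglyMeasurable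
    · simp [Complex.norm_exp]
  have hqint : ∀ k : ℕ, Integrable (q k) := fun k => (hrint k).const_mul _
  have hqval : ∀ k : ℕ, ∫ τ, q k τ = xcomp A φ k t * hatg g (σ t * (η - deriv (φ k) t)) := by
    intro k
    simp only [hq]
    rw [MeasureTheory.integral_const_mul]
    congr 1
    exact scaled_fourier g (σ t) hσt (η - deriv (φ k) t)
  -- aSTFT as integral of sum
  have hstft : aSTFT x g σ t η = ∫ τ, ∑ k ∈ Finset.range (K + 1), p k τ := by
    rw [aSTFT]
    apply integral_congr_ae
    filter_upwards with τ
    rw [hx (t + τ), Finset.sum_mul, Finset.sum_mul]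
    simp only [hp]
    congr 1
    funext k
    ring
  -- pointwise difference bound
  have hptw : ∀ k ≤ K, ∀ τ : ℝ, ‖p k τ - q k τ‖ ≤
      A k t * (ε1 * (|τ| ^ (1:ℕ) * ((σ t)⁻¹ * |g (τ / σ t)|))
        + π * ε2 * (|τ| ^ (2:ℕ) * ((σ t)⁻¹ * |g (τ / σ t)|))) := by
    intro k hk τ
    have hApk := hApos k hk t
    -- rewrite q k τ
    have hqe : q k τ = (xcomp A φ k t *
        Complex.exp (((2 * π * deriv (φ k) t * τ : ℝ) : ℂ) * Complex.I)) * (w τ * E τ) := by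
      have hee : Complex.exp (((2 * π * deriv (φ k) t * τ : ℝ) : ℂ) * Complex.I) *
          Complex.exp (-(2 * (π : ℂ) * η * τ) * Complex.I)
          = Complex.exp (-(2 * (π : ℂ) * ((η - deriv (φ k) t : ℝ) : ℂ) * τ) * Complex.I) := by
        rw [← Complex.exp_add]
        congr 1
        push_cast
        ring
      simp only [hq, hE]
      rw [← hee]
      ring
    rw [hqe]
    simp only [hp]
    rw [← sub_mul, norm_mul, hnormwE]
    have hfront : ‖xcomp A φ k (t + τ) - xcomp A φ k t *
        Complex.exp (((2 * π * deriv (φ k) t * τ : ℝ) : ℂ) * Complex.I)‖ ≤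
        A k t * (ε1 * |τ| + π * ε2 * τ ^ 2) := by
      have e2 : xcomp A φ k t * Complex.exp (((2 * π * deriv (φ k) t * τ : ℝ) : ℂ) * Complex.I)
          = ((A k t : ℝ) : ℂ) *
            Complex.exp (((2 * π * (φ k t + deriv (φ k) t * τ) : ℝ) : ℂ) * Complex.I) := by
        rw [xcomp, mul_assoc, ← Complex.exp_add]
        congr 2
        push_cast
        ring
      have e3 : xcomp A φ k (t + τ) = ((A k (t + τ) : ℝ) : ℂ) *
          Complex.exp (((2 * π * φ k (t + τ) : ℝ) : ℂ) * Complex.I) := by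
        rw [xcomp]
        congr 2
        push_cast
        ring
      have hsplit : xcomp A φ k (t + τ) - xcomp A φ k t *
          Complex.exp (((2 * π * deriv (φ k) t * τ : ℝ) : ℂ) * Complex.I)
          = ((A k (t + τ) - A k t : ℝ) : ℂ) *
              Complex.exp (((2 * π * φ k (t + τ) : ℝ) : ℂ) * Complex.I)
            + ((A k t : ℝ) : ℂ) * (Complex.exp (((2 * π * φ k (t + τ) : ℝ) : ℂ) * Complex.I)
              - Complex.exp (((2 * π * (φ k t + deriv (φ k) t * τ) : ℝ) : ℂ) * Complex.I)) := by
        rw [e3, e2]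
        push_cast
        ring
      rw [hsplit]
      have hn1 : ‖((A k (t + τ) - A k t : ℝ) : ℂ) *
          Complex.exp (((2 * π * φ k (t + τ) : ℝ) : ℂ) * Complex.I)‖
          = |A k (t + τ) - A k t| := by
        rw [norm_mul, Complex.norm_real, Real.norm_eq_abs,
          Complex.norm_exp_ofReal_mul_I, mul_one]
      have hn2 : ‖((A k t : ℝ) : ℂ) * (Complex.exp (((2 * π * φ k (t + τ) : ℝ) : ℂ) * Complex.I)
          - Complex.exp (((2 * π * (φ k t + deriv (φ k) t * τ) : ℝ) : ℂ) * Complex.I))‖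
          = A k t * ‖Complex.exp (((2 * π * φ k (t + τ) : ℝ) : ℂ) * Complex.I)
            - Complex.exp (((2 * π * (φ k t + deriv (φ k) t * τ) : ℝ) : ℂ) * Complex.I)‖ := by
        rw [norm_mul, Complex.norm_real, Real.norm_eq_abs, abs_of_pos hApk]
      have hexp : ‖Complex.exp (((2 * π * φ k (t + τ) : ℝ) : ℂ) * Complex.I)
          - Complex.exp (((2 * π * (φ k t + deriv (φ k) t * τ) : ℝ) : ℂ) * Complex.I)‖
          ≤ π * ε2 * τ ^ 2 := by
        refine (norm_expI_sub_expI _ _).trans ?_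
        have : |2 * π * φ k (t + τ) - 2 * π * (φ k t + deriv (φ k) t * τ)|
            = 2 * π * |φ k (t + τ) - φ k t - deriv (φ k) t * τ| := by
          rw [show 2 * π * φ k (t + τ) - 2 * π * (φ k t + deriv (φ k) t * τ)
            = (2 * π) * (φ k (t + τ) - φ k t - deriv (φ k) t * τ) by ring,
            abs_mul (2 * π) _, abs_of_nonneg (by positivity : (0:ℝ) ≤ 2 * π)]
        rw [this]
        have := htay k hk τ
        nlinarith [Real.pi_pos]
      calc ‖_ + _‖ ≤ |A k (t + τ) - A k t| + A k t *
            ‖Complex.exp (((2 * π * φ k (t + τ) : ℝ) : ℂ) * Complex.I)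
            - Complex.exp (((2 * π * (φ k t + deriv (φ k) t * τ) : ℝ) : ℂ) * Complex.I)‖ := by
            rw [← hn1, ← hn2]
            exact norm_add_le _ _
        _ ≤ ε1 * |τ| * A k t + A k t * (π * ε2 * τ ^ 2) := by
            gcongr <;> first
              | exact hAlip k hk t τ
              | exact hexp
              | exact hApk.le
              | positivity
        _ = A k t * (ε1 * |τ| + π * ε2 * τ ^ 2) := by ring
    calc ‖xcomp A φ k (t + τ) - xcomp A φ k t *
        Complex.exp (((2 * π * deriv (φ k) t * τ : ℝ) : ℂ) * Complex.I)‖ *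
          ((σ t)⁻¹ * |g (τ / σ t)|)
        ≤ (A k t * (ε1 * |τ| + π * ε2 * τ ^ 2)) * ((σ t)⁻¹ * |g (τ / σ t)|) := by
          apply mul_le_mul_of_nonneg_right hfront
          positivity
      _ = A k t * (ε1 * (|τ| ^ (1:ℕ) * ((σ t)⁻¹ * |g (τ / σ t)|))
            + π * ε2 * (|τ| ^ (2:ℕ) * ((σ t)⁻¹ * |g (τ / σ t)|))) := by
          rw [pow_one, sq_abs]
          ring
  -- bound function integrable with known integral
  have hbint : ∀ k ≤ K, Integrable (fun τ : ℝ =>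
      A k t * (ε1 * (|τ| ^ (1:ℕ) * ((σ t)⁻¹ * |g (τ / σ t)|))
        + π * ε2 * (|τ| ^ (2:ℕ) * ((σ t)⁻¹ * |g (τ / σ t)|)))) := by
    intro k hk
    exact (((hint1.const_mul ε1).add (hint2.const_mul (π * ε2))).const_mul (A k t))
  have hbval : ∀ k : ℕ, (∫ τ : ℝ,
      A k t * (ε1 * (|τ| ^ (1:ℕ) * ((σ t)⁻¹ * |g (τ / σ t)|))
        + π * ε2 * (|τ| ^ (2:ℕ) * ((σ t)⁻¹ * |g (τ / σ t)|))))
      = A k t * lam0 g σ ε1 ε2 t := by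
    intro k
    rw [MeasureTheory.integral_const_mul, integral_add (hint1.const_mul ε1)
      (hint2.const_mul (π * ε2)), MeasureTheory.integral_const_mul,
      MeasureTheory.integral_const_mul, hm1, hm2, lam0]
    ring
  -- assemble
  have hdiff : ∀ k ≤ K, ‖(∫ τ, p k τ) - ∫ τ, q k τ‖ ≤ A k t * lam0 g σ ε1 ε2 t := by
    intro k hk
    rw [← integral_sub (hpint k hk) (hqint k)]
    rw [← hbval k]
    exact norm_integral_le_of_norm_le (hbint k hk)
      (Filter.Eventually.of_forall fun τ => hptw k hk τ)
  calc ‖aSTFT x g σ t η - ∑ k ∈ Finset.range (K + 1),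
        xcomp A φ k t * hatg g (σ t * (η - deriv (φ k) t))‖
      = ‖∑ k ∈ Finset.range (K + 1), ((∫ τ, p k τ) - ∫ τ, q k τ)‖ := by
        rw [hstft, integral_finset_sum _ (fun k hk => hpint k (Nat.lt_succ_iff.mp
          (Finset.mem_range.mp hk)))]
        rw [Finset.sum_sub_distrib]
        congr 1
        congr 1
        apply Finset.sum_congr rfl
        intro k _
        exact (hqval k).symm
    _ ≤ ∑ k ∈ Finset.range (K + 1), A k t * lam0 g σ ε1 ε2 t := by
        refine (norm_sum_le _ _).trans (Finset.sum_le_sum fun k hk => hdiff k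
          (Nat.lt_succ_iff.mp (Finset.mem_range.mp hk)))
    _ = Msum K A t * lam0 g σ ε1 ε2 t := by
        rw [Msum, Finset.sum_mul]


theorem cor2_1c (K : ℕ) (A φ : ℕ → ℝ → ℝ) (ε1 ε2 : ℝ) (x : ℝ → ℂ)
    (g : ℝ → ℝ) (σ : ℝ → ℝ) (α t epst : ℝ)
    (hε1 : 0 < ε1) (hε2 : 0 < ε2)
    (hAreg : ∀ k ≤ K, ContDiff ℝ 1 (A k))
    (hAbdd : ∀ k ≤ K, ∃ C, ∀ s, |A k s| ≤ C)
    (hφreg : ∀ k ≤ K, ContDiff ℝ 2 (φ k))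
    (hφ0 : ∀ s, φ 0 s = 0)
    (hApos : ∀ k ≤ K, ∀ s, 0 < A k s)
    (hφ'pos : ∀ k, 1 ≤ k → k ≤ K → ∃ c > 0, ∀ s, c ≤ deriv (φ k) s)
    (hφ'bdd : ∀ k, 1 ≤ k → k ≤ K → ∃ C, ∀ s, deriv (φ k) s ≤ C)
    (hfreq : ∃ d > 0, ∀ k, 2 ≤ k → k ≤ K → ∀ s, d ≤ deriv (φ k) s - deriv (φ (k - 1)) s)
    (hAlip : ∀ k ≤ K, ∀ s τ, |A k (s + τ) - A k s| ≤ ε1 * |τ| * A k s)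
    (hφ'' : ∀ k, 1 ≤ k → k ≤ K → ∀ s, |deriv (deriv (φ k)) s| ≤ ε2)
    (hx : ∀ s, x s = ∑ k ∈ Finset.range (K + 1), xcomp A φ k s)
    (hgint : Integrable g)
    (hgL2 : MemLp g 2 (volume : Measure ℝ))
    (hgI1 : Integrable fun τ : ℝ => τ * g τ)
    (hgI2 : Integrable fun τ : ℝ => τ ^ 2 * g τ)
    (hgnorm : (∫ τ : ℝ, g τ) = 1)
    (β : ℝ) (hβ : 0 < β)
    (hgeven : ∀ ξ, ‖hatg g (-ξ)‖ = ‖hatg g ξ‖)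
    (hgdecβ : ∀ ξ1 ξ2, 0 ≤ ξ1 → ξ1 ≤ ξ2 → ξ2 ≤ β → ‖hatg g ξ2‖ ≤ ‖hatg g ξ1‖)
    (hsuppβ : ∀ ξ, β < |ξ| → hatg g ξ = 0)
    (hα : 0 < α)
    (hsuppα : ∀ ξ, α < |ξ| → hatg g ξ = 0)
    (hσ : ∀ s, 0 < σ s)
    (hsep : ∀ s, ∀ k, 1 ≤ k → k ≤ K →
      2 * α / (deriv (φ k) s - deriv (φ (k - 1)) s) ≤ σ s)
    (hmain : 2 * Msum K A t * lam0 g σ ε1 ε2 t ≤ muMin K A t)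
    (heps1 : Msum K A t * lam0 g σ ε1 ε2 t ≤ epst)
    (heps2 : epst ≤ muMin K A t - Msum K A t * lam0 g σ ε1 ε2 t)
    (ginv : ℝ → ℝ)
    (hginvβ : ∀ ξ, 0 ≤ ξ → ξ ≤ β → ginv ‖hatg g ξ‖ = ξ)
    (ηhat : ℕ → ℝ)
    (hηmem : ∀ l, 1 ≤ l → l ≤ K → ηhat l ∈ Gtk x g σ φ α t epst l)
    (hηmax : ∀ l, 1 ≤ l → l ≤ K → ∀ η ∈ Gtk x g σ φ α t epst l,
      ‖aSTFT x g σ t η‖ ≤ ‖aSTFT x g σ t (ηhat l)‖)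
    (hη0 : ηhat 0 = 0)
    :
    ∀ l ≤ K,
      ‖aSTFT x g σ t (ηhat l) - xcomp A φ l t‖ ≤
        Msum K A t * lam0 g σ ε1 ε2 t +
          2 * π * momentI g 1 * A l t *
            ginv (1 - 2 * Msum K A t * lam0 g σ ε1 ε2 t / A l t) := by
  intro l hl
  have hσt : 0 < σ t := hσ t
  have hφ0f : φ 0 = fun _ => (0:ℝ) := funext hφ0
  have hd0 : ∀ s, deriv (φ 0) s = 0 := fun s => by rw [hφ0f]; simp
  have htay : ∀ k ≤ K, ∀ τ : ℝ, |φ k (t + τ) - φ k t - deriv (φ k) t * τ| ≤ ε2 * τ ^ 2 / 2 := by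
    intro k hk τ
    rcases Nat.eq_zero_or_pos k with rfl | hk1
    · rw [hφ0f]
      simp
      positivity
    · exact quad_taylor (φ k) (hφreg k hk) ε2 hε2.le (hφ'' k hk1 hk) t τ
  have key := key_approx K A φ ε1 ε2 x g σ t hε1 hε2 hAreg hAbdd hφreg hφ0 hApos hAlip hφ''
    hx hgint hgI1 hgI2 hσ htay
  -- consecutive gaps
  have hconsec : ∀ k, 1 ≤ k → k ≤ K → 2 * α / σ t ≤ deriv (φ k) t - deriv (φ (k - 1)) t := by
    intro k h1 h2
    have hgappos : 0 < deriv (φ k) t - deriv (φ (k - 1)) t := by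
      rcases eq_or_lt_of_le h1 with heq | hlt
      · obtain ⟨c, hc, hcall⟩ := hφ'pos 1 le_rfl (by omega)
        rw [← heq]
        have : (1:ℕ) - 1 = 0 := rfl
        rw [this, hd0 t]
        linarith [hcall t]
      · obtain ⟨d, hd, hdall⟩ := hfreq
        linarith [hdall k (by omega) h2 t]
    have hs := hsep t k h1 h2
    rw [div_le_iff₀ hgappos] at hs
    rw [div_le_iff₀ hσt]
    nlinarith
  have hmono : ∀ k ≤ K, ∀ j ≤ k, deriv (φ j) t ≤ deriv (φ k) t := by
    intro k
    induction k with
    | zero => intro _ j hj; rw [Nat.le_zero.mp hj]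
    | succ n ih =>
      intro hk j hj
      rcases eq_or_lt_of_le hj with heq | hlt
      · rw [heq]
      · have h5 := ih (by omega) j (by omega)
        have h6 := hconsec (n + 1) (by omega) hk
        have h7 : n + 1 - 1 = n := rfl
        rw [h7] at h6
        have hpos : 0 ≤ 2 * α / σ t := by positivity
        linarith
  have hfar : ∀ j ≤ K, ∀ k ≤ K, j ≠ k → 2 * α / σ t ≤ |deriv (φ k) t - deriv (φ j) t| := by
    have base : ∀ j k, j < k → k ≤ K → 2 * α / σ t ≤ deriv (φ k) t - deriv (φ j) t := by
      intro j k hjk hk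
      have h3 := hconsec k (by omega) hk
      have h4 := hmono (k - 1) (by omega) j (by omega)
      linarith
    intro j hj k hk hne
    rcases lt_or_gt_of_ne hne with h | h
    · have hb := base j k h hk
      have hnn : 0 ≤ deriv (φ k) t - deriv (φ j) t := le_trans (by positivity) hb
      rwa [abs_of_nonneg hnn]
    · have hb := base k j h hj
      have hnn : 0 ≤ deriv (φ j) t - deriv (φ k) t := le_trans (by positivity) hb
      rw [abs_sub_comm, abs_of_nonneg hnn]
      exact hb
  have hvanish : ∀ m ≤ K, ∀ η : ℝ, |η - deriv (φ m) t| < α / σ t →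
      ∀ k ≤ K, k ≠ m → hatg g (σ t * (η - deriv (φ k) t)) = 0 := by
    intro m hm η hη k hk hkm
    apply hsuppα
    have h1 := hfar m hm k hk (fun h => hkm h.symm)
    have h2 : α / σ t < |η - deriv (φ k) t| := by
      have h3 : |deriv (φ k) t - deriv (φ m) t| ≤ |η - deriv (φ k) t| + |η - deriv (φ m) t| := by
        have h5 := abs_add_le (η - deriv (φ m) t) (deriv (φ k) t - η)
        rw [show η - deriv (φ m) t + (deriv (φ k) t - η)
          = deriv (φ k) t - deriv (φ m) t by ring] at h5
        rw [abs_sub_comm (deriv (φ k) t) η] at h5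
        linarith
      have hαpos : 0 < α / σ t := by positivity
      have h4 : 2 * α / σ t = α / σ t + α / σ t := by ring
      linarith
    rw [abs_mul, abs_of_pos hσt]
    calc α = σ t * (α / σ t) := by field_simp
    _ < σ t * |η - deriv (φ k) t| := by
        exact mul_lt_mul_of_pos_left h2 hσt
  have key2 : ∀ m ≤ K, ∀ η : ℝ, |η - deriv (φ m) t| < α / σ t →
      ‖aSTFT x g σ t η - xcomp A φ m t * hatg g (σ t * (η - deriv (φ m) t))‖ ≤
        Msum K A t * lam0 g σ ε1 ε2 t := by
    intro m hm η hη
    have hkk := key η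
    rwa [Finset.sum_eq_single m
      (fun k hkmem hne => by
        rw [hvanish m hm η hη k (Nat.lt_succ_iff.mp (Finset.mem_range.mp hkmem)) hne, mul_zero])
      (fun hnot => absurd (Finset.mem_range.mpr (by omega)) hnot)] at hkk
  -- hatg facts
  have hLip : ∀ ξ1 ξ2 : ℝ, ‖hatg g ξ1 - hatg g ξ2‖ ≤ 2 * π * momentI g 1 * |ξ1 - ξ2| :=
    hatg_lip g hgint hgI1
  have hg0 : hatg g 0 = 1 := hatg_zero g hgnorm
  have hI1nn : 0 ≤ momentI g 1 := momentI_nonneg g 1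
  have hβ0 : hatg g β = 0 := by
    have hbd : ∀ δ : ℝ, 0 < δ → ‖hatg g β‖ ≤ 2 * π * momentI g 1 * δ := by
      intro δ hδ
      have h1 : hatg g (β + δ) = 0 := hsuppβ _ (by rw [abs_of_pos (by linarith)]; linarith)
      calc ‖hatg g β‖ = ‖hatg g β - hatg g (β + δ)‖ := by rw [h1, sub_zero]
      _ ≤ 2 * π * momentI g 1 * |β - (β + δ)| := hLip _ _
      _ = 2 * π * momentI g 1 * δ := by
          rw [show β - (β + δ) = -δ by ring, abs_neg, abs_of_pos hδ]
    have : ‖hatg g β‖ ≤ 0 := by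
      by_contra hcon
      push_neg at hcon
      have h2 := hbd (‖hatg g β‖ / (2 * (2 * π * momentI g 1) + 1)) (by positivity)
      have h3 : 0 ≤ 2 * π * momentI g 1 := by positivity
      have hCp : (0:ℝ) < 2 * (2 * π * momentI g 1) + 1 := by positivity
      have h4 : 2 * π * momentI g 1 * (‖hatg g β‖ / (2 * (2 * π * momentI g 1) + 1))
          * (2 * (2 * π * momentI g 1) + 1) = 2 * π * momentI g 1 * ‖hatg g β‖ := by
        field_simp
      nlinarith [mul_le_mul_of_nonneg_right h2 hCp.le]
    simpa using le_antisymm this (norm_nonneg _)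
  have h2πβ : 1 ≤ 2 * π * momentI g 1 * β := by
    have hL0 := hLip 0 β
    rw [hg0, hβ0, sub_zero, show (0:ℝ) - β = -β by ring, abs_neg, abs_of_pos hβ] at hL0
    simpa using hL0
  have hcont : Continuous fun ξ => ‖hatg g ξ‖ := by
    have hL : LipschitzWith (Real.toNNReal (2 * π * momentI g 1)) (hatg g) := by
      apply LipschitzWith.of_dist_le_mul
      intro a b
      rw [dist_eq_norm, Real.dist_eq, Real.coe_toNNReal _ (by positivity)]
      exact hLip a b
    exact hL.continuous.norm
  -- l-specific quantities
  have hAl : 0 < A l t := hApos l hl t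
  have hMlam : 0 ≤ Msum K A t * lam0 g σ ε1 ε2 t := by
    have hM : 0 < Msum K A t := Finset.sum_pos
      (fun k hk => hApos k (Nat.lt_succ_iff.mp (Finset.mem_range.mp hk)) t)
      ⟨0, Finset.mem_range.mpr (by omega)⟩
    have hlam : 0 ≤ lam0 g σ ε1 ε2 t := by
      rw [lam0]
      have := momentI_nonneg g 2
      positivity
    positivity
  have hAμ : muMin K A t ≤ A l t := Finset.inf'_le _ (Finset.mem_range.mpr (by omega))
  set v : ℝ := 1 - 2 * Msum K A t * lam0 g σ ε1 ε2 t / A l t with hvdef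
  have hv0 : 0 ≤ v := by
    rw [hvdef, sub_nonneg, div_le_one hAl]
    calc 2 * Msum K A t * lam0 g σ ε1 ε2 t = 2 * Msum K A t * lam0 g σ ε1 ε2 t := rfl
    _ ≤ muMin K A t := hmain
    _ ≤ A l t := hAμ
  have hv1 : v ≤ 1 := by
    rw [hvdef]
    have hq : (0:ℝ) ≤ 2 * Msum K A t * lam0 g σ ε1 ε2 t / A l t :=
      div_nonneg (by linarith) hAl.le
    linarith
  have hDlt : |ηhat l - deriv (φ l) t| < α / σ t := by
    rcases Nat.eq_zero_or_pos l with rfl | hl1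
    · rw [hη0, hd0 t]
      simpa using (by positivity : (0:ℝ) < α / σ t)
    · exact (hηmem l hl1 hl).2
  have hkey2D := key2 l hl (ηhat l) hDlt
  have hgD : v ≤ ‖hatg g (σ t * (ηhat l - deriv (φ l) t))‖ := by
    rcases Nat.eq_zero_or_pos l with rfl | hl1
    · rw [hη0, hd0 t, show σ t * ((0:ℝ) - 0) = 0 by ring, hg0]
      simpa using hv1
    · have h6 : ‖xcomp A φ l t * hatg g (σ t * (ηhat l - deriv (φ l) t))‖
          = A l t * ‖hatg g (σ t * (ηhat l - deriv (φ l) t))‖ := by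
        rw [norm_mul, norm_xcomp, abs_of_pos hAl]
      have hub : ‖aSTFT x g σ t (ηhat l)‖ ≤
          A l t * ‖hatg g (σ t * (ηhat l - deriv (φ l) t))‖ + Msum K A t * lam0 g σ ε1 ε2 t := by
        have h7 := norm_sub_norm_le (aSTFT x g σ t (ηhat l))
          (xcomp A φ l t * hatg g (σ t * (ηhat l - deriv (φ l) t)))
        linarith [hkey2D, h6.symm.le, h6.le]
      have hcenter : |deriv (φ l) t - deriv (φ l) t| < α / σ t := by
        simpa using (by positivity : (0:ℝ) < α / σ t)
      have hkeyc := key2 l hl (deriv (φ l) t) hcenter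
      rw [sub_self, mul_zero, hg0, mul_one] at hkeyc
      have h9 : ‖xcomp A φ l t‖ = A l t := by rw [norm_xcomp, abs_of_pos hAl]
      have hSc : A l t - Msum K A t * lam0 g σ ε1 ε2 t ≤
          ‖aSTFT x g σ t (deriv (φ l) t)‖ := by
        have h8 := norm_sub_norm_le (xcomp A φ l t) (aSTFT x g σ t (deriv (φ l) t))
        rw [norm_sub_rev] at h8
        linarith
      have hlb : A l t - Msum K A t * lam0 g σ ε1 ε2 t ≤ ‖aSTFT x g σ t (ηhat l)‖ := by
        by_cases hin : epst < ‖aSTFT x g σ t (deriv (φ l) t)‖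
        · exact hSc.trans (hηmax l hl1 hl _ ⟨hin, hcenter⟩)
        · push_neg at hin
          have h10 : epst < ‖aSTFT x g σ t (ηhat l)‖ := (hηmem l hl1 hl).1
          linarith
      have hA2 : A l t - 2 * (Msum K A t * lam0 g σ ε1 ε2 t) ≤
          A l t * ‖hatg g (σ t * (ηhat l - deriv (φ l) t))‖ := by linarith
      rw [hvdef]
      have hdiv : 2 * Msum K A t * lam0 g σ ε1 ε2 t / A l t * A l t
          = 2 * Msum K A t * lam0 g σ ε1 ε2 t := div_mul_cancel₀ _ hAl.ne'
      nlinarith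
  have hginvb : ‖hatg g (σ t * (ηhat l - deriv (φ l) t)) - 1‖
      ≤ 2 * π * momentI g 1 * ginv v := by
    set D : ℝ := σ t * (ηhat l - deriv (φ l) t) with hDdef
    rcases le_or_gt |D| β with hcase | hcase
    · have hnormD : ‖hatg g |D|‖ = ‖hatg g D‖ := by
        rcases abs_choice D with h | h
        · rw [h]
        · rw [h, hgeven]
      have hsub : Set.Icc (‖hatg g β‖) (‖hatg g |D|‖) ⊆
          (fun ξ => ‖hatg g ξ‖) '' Set.Icc |D| β :=
        intermediate_value_Icc' hcase hcont.continuousOn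
      have hvmem : v ∈ Set.Icc (‖hatg g β‖) (‖hatg g |D|‖) := by
        constructor
        · rw [hβ0]
          simpa using hv0
        · rw [hnormD]
          exact hgD
      obtain ⟨ξs, hξmem, hξval⟩ := hsub hvmem
      have hginveq : ginv v = ξs := by
        rw [← hξval]
        exact hginvβ ξs (le_trans (abs_nonneg D) hξmem.1) hξmem.2
      calc ‖hatg g D - 1‖ = ‖hatg g D - hatg g 0‖ := by rw [hg0]
      _ ≤ 2 * π * momentI g 1 * |D - 0| := hLip _ _
      _ = 2 * π * momentI g 1 * |D| := by rw [sub_zero]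
      _ ≤ 2 * π * momentI g 1 * ginv v := by
          rw [hginveq]
          exact mul_le_mul_of_nonneg_left hξmem.1 (by positivity)
    · have hD0 : hatg g D = 0 := hsuppβ D hcase
      have hveq : v = 0 := by
        rw [hD0] at hgD
        simp only [norm_zero] at hgD
        exact le_antisymm hgD hv0
      have hginveq : ginv v = β := by
        have hgb := hginvβ β hβ.le le_rfl
        rw [hβ0, norm_zero] at hgb
        rw [hveq, hgb]
      rw [hD0, hginveq]
      simpa using h2πβ
  have hxcnorm : ‖xcomp A φ l t‖ = A l t := by rw [norm_xcomp, abs_of_pos hAl]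
  calc ‖aSTFT x g σ t (ηhat l) - xcomp A φ l t‖
      ≤ ‖aSTFT x g σ t (ηhat l) - xcomp A φ l t * hatg g (σ t * (ηhat l - deriv (φ l) t))‖
        + ‖xcomp A φ l t * hatg g (σ t * (ηhat l - deriv (φ l) t)) - xcomp A φ l t‖ := by
        have h12 := norm_add_le
          (aSTFT x g σ t (ηhat l) - xcomp A φ l t * hatg g (σ t * (ηhat l - deriv (φ l) t)))
          (xcomp A φ l t * hatg g (σ t * (ηhat l - deriv (φ l) t)) - xcomp A φ l t)
        simpa using h12
    _ ≤ Msum K A t * lam0 g σ ε1 ε2 t + A l t * (2 * π * momentI g 1 * ginv v) := by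
        have h11 : ‖xcomp A φ l t * hatg g (σ t * (ηhat l - deriv (φ l) t)) - xcomp A φ l t‖
            = A l t * ‖hatg g (σ t * (ηhat l - deriv (φ l) t)) - 1‖ := by
          rw [show xcomp A φ l t * hatg g (σ t * (ηhat l - deriv (φ l) t)) - xcomp A φ l t
            = xcomp A φ l t * (hatg g (σ t * (ηhat l - deriv (φ l) t)) - 1) by ring,
            norm_mul, hxcnorm]
        rw [h11]
        have h13 := mul_le_mul_of_nonneg_left hginvb hAl.le
        linarith [hkey2D]
    _ = Msum K A t * lam0 g σ ε1 ε2 t + 2 * π * momentI g 1 * A l t * ginv v := by ring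
end
end

section
/- Corollary 2.2 (IF estimate, Gaussian window). Fix t ∈ ℝ. Let x ∈ 𝓑_{ε1,ε2} and let g be the Gaussian window g(τ) = (1/√(2π)) e^{−τ²/2} (so ĝ(ξ) = e^{−2π²ξ²}). Suppose the separation condition σ(t) ≥ 2α/(φ'_k(t) − φ'_{k−1}(t)) holds for all t and k = 1,…,K, 2M(t)(τ0 + λ_0(t)) ≤ μ(t), ε̃1 satisfies M(t)(τ0 + λ_0(t)) ≤ ε̃1 ≤ μ(t) − M(t)(τ0 + λ_0(t)), and err_ℓ(t) < A_ℓ(t)/4. Then for each ℓ = 1,…,K, |η̂_ℓ(t) − φ'_ℓ(t)| < (√2/(σ(t)π)) · √(err_ℓ(t)/A_ℓ(t)). -/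
open MeasureTheory Real

noncomputable section

/-- The Gaussian-window version of `err_ℓ(t)`. -/
def errG (K : ℕ) (A : ℕ → ℝ → ℝ) (g : ℝ → ℝ) (σ : ℝ → ℝ) (α ε1 ε2 : ℝ)
    (l : ℕ) (t : ℝ) : ℝ :=
  ε1 * momentI g 1 * σ t * Msum K A t + π * ε2 * momentI g 2 * σ t ^ 2 * Msum K A t +
    ∑ k ∈ (Finset.range (K + 1)).erase l,
      A k t * Real.exp (-(2 * π ^ 2 * (α * (2 * |(l : ℝ) - (k : ℝ)| - 1)) ^ 2))


set_option maxHeartbeats 1000000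

def gauss0 : ℝ → ℝ := fun τ => (Real.sqrt (2*π))⁻¹ * Real.exp (-τ^2/2)

lemma gauss0_pos (τ : ℝ) : 0 < gauss0 τ := by
  unfold gauss0; positivity

lemma gauss0_cont : Continuous gauss0 := by
  unfold gauss0; fun_prop

lemma int_g : Integrable gauss0 := by
  have : gauss0 = fun τ => (Real.sqrt (2*π))⁻¹ * Real.exp (-(1/2:ℝ)*τ^2) := by
    funext τ; unfold gauss0; ring_nf
  rw [this]
  exact (integrable_exp_neg_mul_sq (by norm_num)).const_mul _

lemma int_abs_g : Integrable (fun τ => |τ| * gauss0 τ) := by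
  have h := (integrable_mul_exp_neg_mul_sq (show (0:ℝ) < 1/2 by norm_num)).abs
  refine ((h.const_mul ((Real.sqrt (2*π))⁻¹)).congr ?_ : Integrable _ _)
  filter_upwards with τ
  unfold gauss0
  rw [abs_mul, abs_of_nonneg (Real.exp_nonneg _)]
  ring_nf

lemma int_sq_g : Integrable (fun τ => τ^2 * gauss0 τ) := by
  refine Integrable.mono' ((integrable_exp_neg_mul_sq (show (0:ℝ) < 1/4 by norm_num)).const_mul
    ((Real.sqrt (2*π))⁻¹ * 4)) ?_ ?_
  · exact ((continuous_pow 2).mul gauss0_cont).aestronglyMeasurable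
  · filter_upwards with τ
    unfold gauss0
    rw [Real.norm_eq_abs, abs_of_nonneg (by positivity : (0:ℝ) ≤ τ^2 * ((Real.sqrt (2*π))⁻¹ * Real.exp (-τ^2/2)))]
    have h1 : τ^2 ≤ 4 * Real.exp (τ^2/4) := by
      have := Real.add_one_le_exp (τ^2/4)
      nlinarith [Real.exp_nonneg (τ^2/4)]
    have h2 : Real.exp (-τ^2/2) = Real.exp (-(τ^2/4)) * Real.exp (-(1/4:ℝ)*τ^2) := by
      rw [← Real.exp_add]; ring_nf
    rw [h2]
    have h3 : τ^2 * Real.exp (-(τ^2/4)) ≤ 4 := by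
      rw [Real.exp_neg]
      rw [mul_inv_le_iff₀ (Real.exp_pos _)]
      linarith [h1]
    calc τ^2 * ((Real.sqrt (2*π))⁻¹ * (Real.exp (-(τ^2/4)) * Real.exp (-(1/4:ℝ)*τ^2)))
        = (Real.sqrt (2*π))⁻¹ * (τ^2 * Real.exp (-(τ^2/4))) * Real.exp (-(1/4:ℝ)*τ^2) := by ring
      _ ≤ (Real.sqrt (2*π))⁻¹ * 4 * Real.exp (-(1/4:ℝ)*τ^2) := by
          have := Real.exp_nonneg (-(1/4:ℝ)*τ^2)
          have h4 : (0:ℝ) ≤ (Real.sqrt (2*π))⁻¹ := by positivity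
          nlinarith [mul_le_mul_of_nonneg_right (mul_le_mul_of_nonneg_left h3 h4) this]



lemma mom1_eq : momentI gauss0 1 = ∫ τ : ℝ, |τ| * gauss0 τ := by
  unfold momentI
  congr 1; funext τ
  rw [pow_one, abs_of_pos (gauss0_pos τ)]

lemma mom2_eq : momentI gauss0 2 = ∫ τ : ℝ, τ^2 * gauss0 τ := by
  unfold momentI
  congr 1; funext τ
  rw [sq_abs, abs_of_pos (gauss0_pos τ)]

lemma int_w {s : ℝ} (hs : 0 < s) : Integrable (fun τ => s⁻¹ * gauss0 (τ/s)) :=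
  (int_g.comp_div hs.ne').const_mul _

lemma int_abs_w {s : ℝ} (hs : 0 < s) : Integrable (fun τ => |τ| * (s⁻¹ * gauss0 (τ/s))) := by
  have h := (int_abs_g.comp_div hs.ne')
  refine (h.congr ?_ : Integrable _ _)
  filter_upwards with τ
  show |τ/s| * gauss0 (τ/s) = |τ| * (s⁻¹ * gauss0 (τ/s))
  rw [abs_div, abs_of_pos hs]
  field_simp

lemma int_sq_w {s : ℝ} (hs : 0 < s) : Integrable (fun τ => τ^2 * (s⁻¹ * gauss0 (τ/s))) := by
  have h := (int_sq_g.comp_div hs.ne').const_mul s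
  refine (h.congr ?_ : Integrable _ _)
  filter_upwards with τ
  show s * ((τ/s)^2 * gauss0 (τ/s)) = τ^2 * (s⁻¹ * gauss0 (τ/s))
  field_simp

lemma mom1_val {s : ℝ} (hs : 0 < s) :
    ∫ τ : ℝ, |τ| * (s⁻¹ * gauss0 (τ/s)) = s * momentI gauss0 1 := by
  rw [mom1_eq]
  have h1 : ∀ τ : ℝ, |τ| * (s⁻¹ * gauss0 (τ/s)) = (fun u => |u| * gauss0 u) (τ/s) := by
    intro τ
    show _ = |τ/s| * gauss0 (τ/s)
    rw [abs_div, abs_of_pos hs]; field_simp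
  simp_rw [h1]
  rw [MeasureTheory.Measure.integral_comp_div (fun u => |u| * gauss0 u) s, abs_of_pos hs,
    smul_eq_mul]

lemma mom2_val {s : ℝ} (hs : 0 < s) :
    ∫ τ : ℝ, τ^2 * (s⁻¹ * gauss0 (τ/s)) = s^2 * momentI gauss0 2 := by
  rw [mom2_eq]
  have h1 : ∀ τ : ℝ, τ^2 * (s⁻¹ * gauss0 (τ/s)) = s • (fun u => u^2 * gauss0 u) (τ/s) := by
    intro τ
    show _ = s * ((τ/s)^2 * gauss0 (τ/s))
    field_simp
  simp_rw [h1]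
  rw [integral_smul, MeasureTheory.Measure.integral_comp_div (fun u => u^2 * gauss0 u) s,
    abs_of_pos hs, smul_eq_mul, smul_eq_mul]
  ring

lemma mom1_pos : 0 < momentI gauss0 1 := by
  rw [mom1_eq]
  rw [MeasureTheory.integral_pos_iff_support_of_nonneg
    (fun τ => mul_nonneg (abs_nonneg τ) (gauss0_pos τ).le) int_abs_g]
  have : Function.support (fun τ : ℝ => |τ| * gauss0 τ) = {0}ᶜ := by
    ext τ
    simp only [Function.mem_support, Set.mem_compl_iff, Set.mem_singleton_iff]
    constructor
    · intro h h0; rw [h0] at h; simp at h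
    · intro h; exact (mul_pos (abs_pos.mpr h) (gauss0_pos τ)).ne'
  rw [this]
  refine lt_of_lt_of_le ?_ (measure_mono (fun y (hy : y ∈ Set.Ioi (0:ℝ)) => ne_of_gt hy))
  rw [Real.volume_Ioi]
  exact ENNReal.zero_lt_top


lemma norm_cexp_real_I (r : ℝ) : ‖Complex.exp ((r:ℂ) * Complex.I)‖ = 1 :=
  Complex.norm_exp_ofReal_mul_I r

lemma exp_I_lip (a b : ℝ) :
    ‖Complex.exp ((a:ℂ) * Complex.I) - Complex.exp ((b:ℂ) * Complex.I)‖ ≤ |a - b| := by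
  have hd : ∀ θ : ℝ, HasDerivAt (fun θ : ℝ => Complex.exp ((θ:ℂ) * Complex.I))
      (Complex.exp ((θ:ℂ) * Complex.I) * Complex.I) θ := by
    intro θ
    have h0 : HasDerivAt (fun θ : ℝ => ((θ:ℝ):ℂ)) 1 θ := Complex.ofRealCLM.hasDerivAt
    have h1 := (h0.mul_const Complex.I).cexp
    simpa using h1
  have := Convex.norm_image_sub_le_of_norm_hasDerivWithin_le
    (f := fun θ : ℝ => Complex.exp ((θ:ℂ) * Complex.I))
    (f' := fun θ : ℝ => Complex.exp ((θ:ℂ) * Complex.I) * Complex.I)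
    (fun θ _ => (hd θ).hasDerivWithinAt)
    (C := 1) (fun θ _ => by simp [norm_cexp_real_I]) convex_univ (Set.mem_univ b) (Set.mem_univ a)
  simpa using this

lemma gauss_ft {s : ℝ} (hs : 0 < s) (c : ℝ) :
    ∫ τ : ℝ, ((s⁻¹ * gauss0 (τ/s) : ℝ) : ℂ) * Complex.exp ((2*(π:ℂ)*c*τ) * Complex.I)
      = (Real.exp (-(2*π^2*(s*c)^2)) : ℂ) := by
  have hb : (0:ℝ) < ((2*s^2)⁻¹) := by positivity
  have h := fourierIntegral_gaussian (b := (((2*s^2)⁻¹ : ℝ) : ℂ))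
    (show 0 < ((((2*s^2)⁻¹ : ℝ):ℂ)).re by rw [Complex.ofReal_re]; positivity) ((2*π*c : ℝ) : ℂ)
  have heq : ∀ τ : ℝ, ((s⁻¹ * gauss0 (τ/s) : ℝ) : ℂ) * Complex.exp ((2*(π:ℂ)*c*τ) * Complex.I)
      = ((s⁻¹ * (Real.sqrt (2*π))⁻¹ : ℝ) : ℂ) *
        (Complex.exp (Complex.I * ((2*π*c : ℝ):ℂ) * τ) *
         Complex.exp (-(((2*s^2)⁻¹ : ℝ):ℂ) * τ^2)) := by
    intro τ
    have hns : s ≠ 0 := hs.ne'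
    unfold gauss0
    rw [show (-((τ/s):ℝ)^2/2 : ℝ) = -((2*s^2)⁻¹) * τ^2 by
      rw [div_pow, neg_div, div_div]; ring]
    push_cast [Complex.ofReal_exp]
    ring
  simp_rw [heq]
  rw [MeasureTheory.integral_const_mul, h]
  have hπb : ((π:ℂ) / (((2*s^2)⁻¹ : ℝ):ℂ)) = ((2*π*s^2 : ℝ) : ℂ) := by
    push_cast
    field_simp
  rw [hπb]
  have hcpow : (((2*π*s^2 : ℝ) : ℂ)) ^ (1/2 : ℂ) = ((Real.sqrt (2*π*s^2) : ℝ) : ℂ) := by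
    rw [show ((1/2 : ℂ)) = ((1/2 : ℝ) : ℂ) by norm_num]
    rw [← Complex.ofReal_cpow (by positivity)]
    norm_cast
    rw [Real.sqrt_eq_rpow]
  have hsq : Real.sqrt (2*π*s^2) = Real.sqrt (2*π) * s := by
    rw [show (2*π*s^2 : ℝ) = (2*π)*s^2 by ring, Real.sqrt_mul (by positivity), Real.sqrt_sq hs.le]
  have hexp : (-(((2*π*c:ℝ)):ℂ)^2 / (4 * (((2*s^2)⁻¹:ℝ):ℂ))) = ((-(2*π^2*(s*c)^2) : ℝ) : ℂ) := by
    have : (s:ℂ) ≠ 0 := by exact_mod_cast hs.ne'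
    push_cast
    field_simp
    ring
  rw [hcpow, hsq, hexp, ← Complex.ofReal_exp]
  have h1 : (s:ℂ) ≠ 0 := by exact_mod_cast hs.ne'
  have h2 : ((Real.sqrt (2*π)):ℂ) ≠ 0 := by
    exact_mod_cast (Real.sqrt_pos.mpr (by positivity : (0:ℝ) < 2*π)).ne'
  have h3 : ((Real.sqrt 2):ℂ) ≠ 0 := by
    exact_mod_cast (Real.sqrt_pos.mpr (by norm_num : (0:ℝ) < 2)).ne'
  have h4 : ((Real.sqrt π):ℂ) ≠ 0 := by
    exact_mod_cast (Real.sqrt_pos.mpr Real.pi_pos).ne'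
  push_cast
  field_simp


lemma taylor2 {f : ℝ → ℝ} (hf : ContDiff ℝ 2 f) {ε : ℝ}
    (hε : ∀ u, |deriv (deriv f) u| ≤ ε) (t τ : ℝ) :
    |f (t + τ) - f t - deriv f t * τ| ≤ ε * τ^2 / 2 := by
  have hd1 : Differentiable ℝ f := hf.differentiable (by norm_num)
  have hf' : ContDiff ℝ 1 (deriv f) := by
    have h := (contDiff_succ_iff_deriv (n := 1)).mp (by exact_mod_cast hf)
    exact h.2.2
  have hd2 : Differentiable ℝ (deriv f) := hf'.differentiable (by norm_num)
  have hc1 : Continuous (deriv f) := hd2.continuous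
  -- Lipschitz bound on deriv f
  have hlip : ∀ u v : ℝ, |deriv f u - deriv f v| ≤ ε * |u - v| := by
    intro u v
    have := Convex.norm_image_sub_le_of_norm_hasDerivWithin_le
      (f := deriv f) (f' := deriv (deriv f))
      (fun z _ => (hd2 z).hasDerivAt.hasDerivWithinAt)
      (C := ε) (fun z _ => by rw [Real.norm_eq_abs]; exact hε z)
      convex_univ (Set.mem_univ v) (Set.mem_univ u)
    simpa [Real.norm_eq_abs] using this
  -- FTC
  have hftc : f (t + τ) - f t = ∫ u in (0:ℝ)..τ, deriv f (t + u) := by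
    have : ∀ u ∈ Set.uIcc (0:ℝ) τ, HasDerivAt (fun u => f (t + u)) (deriv f (t + u)) u := by
      intro u _
      have h := (hd1 (t + u)).hasDerivAt.comp u ((hasDerivAt_id u).const_add t)
      simpa [Function.comp_def] using h
    rw [intervalIntegral.integral_eq_sub_of_hasDerivAt this
      (((by fun_prop : Continuous (fun u : ℝ => deriv f (t + u))).intervalIntegrable 0 τ))]
    simp
  have hconst : deriv f t * τ = ∫ u in (0:ℝ)..τ, deriv f t := by simp [mul_comm]
  rw [hftc, hconst, ← intervalIntegral.integral_sub
    (((by fun_prop : Continuous (fun u : ℝ => deriv f (t + u))).intervalIntegrable 0 τ))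
    (intervalIntegrable_const)]
  have hbd : ∀ u : ℝ, |deriv f (t + u) - deriv f t| ≤ ε * |u| := by
    intro u
    have := hlip (t + u) t
    simpa using this
  rcases le_or_gt 0 τ with hτ | hτ
  · calc |∫ u in (0:ℝ)..τ, (deriv f (t + u) - deriv f t)|
        ≤ ∫ u in (0:ℝ)..τ, |deriv f (t + u) - deriv f t| :=
          intervalIntegral.abs_integral_le_integral_abs hτ
      _ ≤ ∫ u in (0:ℝ)..τ, ε * u := by
          apply intervalIntegral.integral_mono_on hτ
          · exact ((by fun_prop : Continuous (fun u : ℝ => |deriv f (t + u) - deriv f t|)).intervalIntegrable 0 τ)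
          · exact (continuous_const.mul continuous_id).intervalIntegrable 0 τ
          · intro u hu
            have := hbd u
            rwa [abs_of_nonneg hu.1] at this
      _ = ε * τ^2 / 2 := by
          rw [intervalIntegral.integral_const_mul, integral_id]
          ring
  · rw [intervalIntegral.integral_symm τ 0, abs_neg]
    calc |∫ u in τ..(0:ℝ), (deriv f (t + u) - deriv f t)|
        ≤ ∫ u in τ..(0:ℝ), |deriv f (t + u) - deriv f t| :=
          intervalIntegral.abs_integral_le_integral_abs hτ.le
      _ ≤ ∫ u in τ..(0:ℝ), ε * (-u) := by
          apply intervalIntegral.integral_mono_on hτ.le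
          · exact ((by fun_prop : Continuous (fun u : ℝ => |deriv f (t + u) - deriv f t|)).intervalIntegrable τ 0)
          · exact (continuous_const.mul continuous_id.neg).intervalIntegrable τ 0
          · intro u hu
            have := hbd u
            rwa [abs_of_nonpos hu.2] at this
      _ = ε * τ^2 / 2 := by
          rw [intervalIntegral.integral_const_mul]
          rw [intervalIntegral.integral_neg, integral_id]
          ring

theorem cor2_2_IF (K : ℕ) (A φ : ℕ → ℝ → ℝ) (ε1 ε2 : ℝ) (x : ℝ → ℂ)
    (g : ℝ → ℝ) (σ : ℝ → ℝ) (τ0 α t epst : ℝ)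
    (hε1 : 0 < ε1) (hε2 : 0 < ε2)
    (hAreg : ∀ k ≤ K, ContDiff ℝ 1 (A k))
    (hAbdd : ∀ k ≤ K, ∃ C, ∀ s, |A k s| ≤ C)
    (hφreg : ∀ k ≤ K, ContDiff ℝ 2 (φ k))
    (hφ0 : ∀ s, φ 0 s = 0)
    (hApos : ∀ k ≤ K, ∀ s, 0 < A k s)
    (hφ'pos : ∀ k, 1 ≤ k → k ≤ K → ∃ c > 0, ∀ s, c ≤ deriv (φ k) s)
    (hφ'bdd : ∀ k, 1 ≤ k → k ≤ K → ∃ C, ∀ s, deriv (φ k) s ≤ C)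
    (hfreq : ∃ d > 0, ∀ k, 2 ≤ k → k ≤ K → ∀ s, d ≤ deriv (φ k) s - deriv (φ (k - 1)) s)
    (hAlip : ∀ k ≤ K, ∀ s τ, |A k (s + τ) - A k s| ≤ ε1 * |τ| * A k s)
    (hφ'' : ∀ k, 1 ≤ k → k ≤ K → ∀ s, |deriv (deriv (φ k)) s| ≤ ε2)
    (hx : ∀ s, x s = ∑ k ∈ Finset.range (K + 1), xcomp A φ k s)
    (hgdef : ∀ τ : ℝ, g τ = (Real.sqrt (2 * π))⁻¹ * Real.exp (-τ ^ 2 / 2))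
    (hτ0 : 0 < τ0) (hτ0' : τ0 < 1)
    (hαdef : α = (2 * π)⁻¹ * Real.sqrt (2 * Real.log τ0⁻¹))
    (hσ : ∀ s, 0 < σ s)
    (hsep : ∀ s, ∀ k, 1 ≤ k → k ≤ K →
      2 * α / (deriv (φ k) s - deriv (φ (k - 1)) s) ≤ σ s)
    (hmain : 2 * Msum K A t * (τ0 + lam0 g σ ε1 ε2 t) ≤ muMin K A t)
    (heps1 : Msum K A t * (τ0 + lam0 g σ ε1 ε2 t) ≤ epst)
    (heps2 : epst ≤ muMin K A t - Msum K A t * (τ0 + lam0 g σ ε1 ε2 t))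
    (hErr : ∀ l ≤ K, errG K A g σ α ε1 ε2 l t < A l t / 4)
    (ηhat : ℕ → ℝ)
    (hηmem : ∀ l, 1 ≤ l → l ≤ K → ηhat l ∈ Gtk x g σ φ α t epst l)
    (hηmax : ∀ l, 1 ≤ l → l ≤ K → ∀ η ∈ Gtk x g σ φ α t epst l,
      ‖aSTFT x g σ t η‖ ≤ ‖aSTFT x g σ t (ηhat l)‖)
    :
    ∀ l, 1 ≤ l → l ≤ K →
      |ηhat l - deriv (φ l) t| <
        Real.sqrt 2 / (σ t * π) * Real.sqrt (errG K A g σ α ε1 ε2 l t / A l t) := by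
  have hgg : g = gauss0 := funext hgdef
  subst hgg
  intro l hl1 hl2
  set s : ℝ := σ t with hsdef
  have hs : 0 < s := hσ t
  have hα : 0 < α := by
    rw [hαdef]
    have h1 : (0:ℝ) < Real.log τ0⁻¹ := Real.log_pos ((one_lt_inv₀ hτ0).mpr hτ0')
    positivity
  have hlK : l ∈ Finset.range (K+1) := Finset.mem_range.mpr (by omega)
  have hM : 0 < Msum K A t :=
    Finset.sum_pos (fun k hk => hApos k (by simpa using Finset.mem_range_succ_iff.mp hk) t)
      ⟨0, Finset.mem_range.mpr (by omega)⟩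
  have hμle : ∀ k ≤ K, muMin K A t ≤ A k t := fun k hk =>
    Finset.inf'_le _ (Finset.mem_range_succ_iff.mpr hk)
  have hb0 : deriv (φ 0) t = 0 := by
    have h : φ 0 = fun _ => (0:ℝ) := funext hφ0
    rw [h]; simp
  -- Taylor bound
  have htay : ∀ k ≤ K, ∀ τ : ℝ, |φ k (t+τ) - φ k t - deriv (φ k) t * τ| ≤ ε2 * τ^2 / 2 := by
    intro k hk τ
    rcases Nat.eq_zero_or_pos k with h0 | h1
    · subst h0
      have h : φ 0 = fun _ => (0:ℝ) := funext hφ0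
      rw [h]
      simp only [deriv_const']
      simp
      positivity
    · exact taylor2 (hφreg k hk) (hφ'' k h1 hk) t τ
  -- gap chain
  have hgap : ∀ j, 1 ≤ j → j ≤ K → 2*α/s ≤ deriv (φ j) t - deriv (φ (j-1)) t := by
    intro j hj1 hj2
    have hpos : 0 < deriv (φ j) t - deriv (φ (j-1)) t := by
      rcases Nat.lt_or_ge j 2 with h2 | h2
      · have hj : j = 1 := by omega
        subst hj
        simp only [Nat.sub_self, hb0, sub_zero]
        obtain ⟨c, hc, hcle⟩ := hφ'pos 1 le_rfl hj2
        calc (0:ℝ) < c := hc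
          _ ≤ _ := hcle t
      · obtain ⟨d, hd, hdle⟩ := hfreq
        calc (0:ℝ) < d := hd
          _ ≤ _ := hdle j h2 hj2 t
    have h := hsep t j hj1 hj2
    rw [div_le_iff₀ hpos] at h
    rw [div_le_iff₀ hs]
    linarith
  have hchain : ∀ k m : ℕ, m ≤ K → k < m →
      ((m:ℝ)-(k:ℝ)) * (2*α/s) ≤ deriv (φ m) t - deriv (φ k) t := by
    intro k m hmK hkm
    induction m with
    | zero => omega
    | succ n ih =>
      rcases Nat.lt_or_ge k n with hkn | hkn
      · have h1 := ih (by omega) hkn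
        have h2 := hgap (n+1) (by omega) hmK
        have h3 : (n+1:ℕ) - 1 = n := by omega
        rw [h3] at h2
        push_cast
        nlinarith [div_nonneg (by linarith : (0:ℝ) ≤ 2*α) hs.le]
      · have hk : k = n := by omega
        subst hk
        have h2 := hgap (k+1) (by omega) hmK
        have h3 : (k+1:ℕ) - 1 = k := by omega
        rw [h3] at h2
        push_cast
        linarith
  -- window
  set w : ℝ → ℝ := fun τ => s⁻¹ * gauss0 (τ/s) with hwdef
  have hwpos : ∀ τ, 0 < w τ := fun τ => by
    have := gauss0_pos (τ/s); rw [hwdef]; positivity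
  -- integrand per component
  set F : ℕ → ℝ → ℝ → ℂ := fun k η τ => xcomp A φ k (t+τ) * ((w τ : ℝ):ℂ) *
    Complex.exp (-(2*(π:ℂ)*η*τ)*Complex.I) with hFdef
  have hFnorm : ∀ k η τ, ‖F k η τ‖ = |A k (t+τ)| * w τ := by
    intro k η τ
    rw [hFdef]
    simp only []
    rw [norm_mul, norm_mul]
    rw [show (-(2*(π:ℂ)*η*τ)*Complex.I) = ((-(2*π*η*τ) : ℝ):ℂ) * Complex.I by push_cast; ring,
      norm_cexp_real_I]
    rw [show (xcomp A φ k (t+τ)) = ((A k (t+τ) : ℝ):ℂ) *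
      Complex.exp (((2*π*(φ k (t+τ)) : ℝ):ℂ) * Complex.I) by
        unfold xcomp; push_cast; ring]
    rw [norm_mul, norm_cexp_real_I, Complex.norm_real, Complex.norm_real, Real.norm_eq_abs,
      Real.norm_eq_abs, abs_of_pos (hwpos τ)]
    ring
  have hFint : ∀ k, k ≤ K → ∀ η, Integrable (F k η) := by
    intro k hk η
    obtain ⟨C, hC⟩ := hAbdd k hk
    have hAc : Continuous (A k) := (hAreg k hk).continuous
    have hφc : Continuous (φ k) := (hφreg k hk).continuous
    refine Integrable.mono' ((int_w hs).const_mul C) ?_ ?_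
    · rw [hFdef]
      apply Continuous.aestronglyMeasurable
      apply Continuous.mul
      apply Continuous.mul
      · unfold xcomp
        fun_prop
      · exact Complex.continuous_ofReal.comp (continuous_const.mul
          (gauss0_cont.comp (continuous_id.div_const s)))
      · fun_prop
    · filter_upwards with τ
      rw [hFnorm]
      exact mul_le_mul_of_nonneg_right (hC (t+τ)) (hwpos τ).le
  have hVsum : ∀ η, aSTFT x gauss0 σ t η = ∑ k ∈ Finset.range (K+1), ∫ τ, F k η τ := by
    intro η
    unfold aSTFT
    rw [← MeasureTheory.integral_finset_sum _ (fun k hk => hFint k (Finset.mem_range_succ_iff.mp hk) η)]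
    congr 1
    funext τ
    rw [hx (t+τ), Finset.sum_mul, Finset.sum_mul]
  -- main term
  set mainv : ℕ → ℝ → ℂ := fun k η => (A k t : ℂ) *
    Complex.exp (((2*π*(φ k t) : ℝ):ℂ) * Complex.I) *
    ((Real.exp (-(2*π^2*(s*(deriv (φ k) t - η))^2)) : ℝ) : ℂ) with hmainvdef
  have hmainv_norm : ∀ k, k ≤ K → ∀ η, ‖mainv k η‖ = A k t * Real.exp (-(2*π^2*(s*(deriv (φ k) t - η))^2)) := by
    intro k hk η
    rw [hmainvdef]
    simp only []
    rw [norm_mul, norm_mul, norm_cexp_real_I, Complex.norm_real, Complex.norm_real,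
      Real.norm_eq_abs, Real.norm_eq_abs, abs_of_nonneg (Real.exp_nonneg _),
      abs_of_pos (hApos k hk t)]
    ring
  set lamf : ℝ := ε1 * momentI gauss0 1 * s + π * ε2 * momentI gauss0 2 * s^2 with hlamf
  -- the approximating integrand
  have happk : ∀ k, k ≤ K → ∀ η, ‖(∫ τ, F k η τ) - mainv k η‖ ≤ lamf * A k t := by
    intro k hk η
    set G : ℝ → ℂ := fun τ => ((A k t : ℝ):ℂ) *
      Complex.exp (((2*π*(φ k t + deriv (φ k) t * τ) : ℝ):ℂ) * Complex.I) * ((w τ : ℝ):ℂ) *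
      Complex.exp (-(2*(π:ℂ)*η*τ)*Complex.I) with hGdef
    have hGnorm : ∀ τ, ‖G τ‖ = |A k t| * w τ := by
      intro τ
      rw [hGdef]
      simp only []
      rw [norm_mul, norm_mul, norm_mul,
        show (-(2*(π:ℂ)*η*τ)*Complex.I) = ((-(2*π*η*τ) : ℝ):ℂ) * Complex.I by push_cast; ring,
        norm_cexp_real_I, norm_cexp_real_I, Complex.norm_real, Complex.norm_real,
        Real.norm_eq_abs, Real.norm_eq_abs, abs_of_pos (hwpos τ)]
      ring
    have hGcont : Continuous G := by
      have hφc : Continuous (φ k) := (hφreg k hk).continuous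
      rw [hGdef]
      apply Continuous.mul
      apply Continuous.mul
      apply Continuous.mul
      · exact continuous_const
      · apply Continuous.cexp
        apply Continuous.mul _ continuous_const
        exact Complex.continuous_ofReal.comp (by fun_prop)
      · exact Complex.continuous_ofReal.comp (continuous_const.mul
          (gauss0_cont.comp (continuous_id.div_const s)))
      · fun_prop
    have hGint : Integrable G := by
      refine Integrable.mono' ((int_w hs).const_mul (|A k t|)) hGcont.aestronglyMeasurable ?_
      filter_upwards with τ
      rw [hGnorm]
    -- value of ∫ G
    have hGval : ∫ τ, G τ = mainv k η := by
      have h1 : ∀ τ : ℝ, G τ = ((A k t : ℝ):ℂ) * Complex.exp (((2*π*(φ k t) : ℝ):ℂ) * Complex.I)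
          * (((w τ : ℝ):ℂ) * Complex.exp ((2*(π:ℂ)*(deriv (φ k) t - η)*τ) * Complex.I)) := by
        intro τ
        have e1 : Complex.exp (((2*π*(φ k t + deriv (φ k) t * τ) : ℝ):ℂ) * Complex.I) *
            Complex.exp (-(2*(π:ℂ)*η*τ)*Complex.I) =
            Complex.exp (((2*π*(φ k t) : ℝ):ℂ) * Complex.I) *
            Complex.exp ((2*(π:ℂ)*(deriv (φ k) t - η)*τ) * Complex.I) := by
          rw [← Complex.exp_add, ← Complex.exp_add]
          congr 1
          push_cast
          ring
        calc G τ = ((A k t : ℝ):ℂ) * ((w τ:ℝ):ℂ) *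
              (Complex.exp (((2*π*(φ k t + deriv (φ k) t * τ) : ℝ):ℂ) * Complex.I) *
               Complex.exp (-(2*(π:ℂ)*η*τ)*Complex.I)) := by rw [hGdef]; ring
          _ = _ := by rw [e1]; ring
      simp_rw [h1]
      rw [MeasureTheory.integral_const_mul]
      simp only [hwdef]
      simp_rw [← Complex.ofReal_sub]
      rw [gauss_ft hs (deriv (φ k) t - η)]
    rw [← hGval, ← MeasureTheory.integral_sub (hFint k hk η) hGint]
    -- pointwise bound
    have hptwise : ∀ τ : ℝ, ‖F k η τ - G τ‖ ≤
        (ε1 * A k t * |τ| + π * ε2 * A k t * τ^2) * w τ := by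
      intro τ
      have hsplit : F k η τ - G τ = (xcomp A φ k (t+τ) - ((A k t : ℝ):ℂ) *
          Complex.exp (((2*π*(φ k t + deriv (φ k) t * τ) : ℝ):ℂ) * Complex.I)) *
          (((w τ : ℝ):ℂ) * Complex.exp (-(2*(π:ℂ)*η*τ)*Complex.I)) := by
        rw [hFdef, hGdef]; simp only []; ring
      rw [hsplit, norm_mul, norm_mul,
        show (-(2*(π:ℂ)*η*τ)*Complex.I) = ((-(2*π*η*τ) : ℝ):ℂ) * Complex.I by push_cast; ring,
        norm_cexp_real_I, Complex.norm_real, Real.norm_eq_abs, abs_of_pos (hwpos τ), mul_one]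
      apply mul_le_mul_of_nonneg_right _ (hwpos τ).le
      have hx1 : xcomp A φ k (t+τ) = ((A k (t+τ) : ℝ):ℂ) *
          Complex.exp (((2*π*(φ k (t+τ)) : ℝ):ℂ) * Complex.I) := by
        unfold xcomp; push_cast; ring
      rw [hx1]
      calc ‖((A k (t+τ) : ℝ):ℂ) * Complex.exp (((2*π*(φ k (t+τ)) : ℝ):ℂ) * Complex.I) -
            ((A k t : ℝ):ℂ) * Complex.exp (((2*π*(φ k t + deriv (φ k) t * τ) : ℝ):ℂ) * Complex.I)‖
          ≤ ‖(((A k (t+τ) - A k t : ℝ)):ℂ) * Complex.exp (((2*π*(φ k (t+τ)) : ℝ):ℂ) * Complex.I)‖ +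
            ‖((A k t : ℝ):ℂ) * (Complex.exp (((2*π*(φ k (t+τ)) : ℝ):ℂ) * Complex.I) -
              Complex.exp (((2*π*(φ k t + deriv (φ k) t * τ) : ℝ):ℂ) * Complex.I))‖ := by
            rw [show ((A k (t+τ) : ℝ):ℂ) * Complex.exp (((2*π*(φ k (t+τ)) : ℝ):ℂ) * Complex.I) -
              ((A k t : ℝ):ℂ) * Complex.exp (((2*π*(φ k t + deriv (φ k) t * τ) : ℝ):ℂ) * Complex.I) =
              (((A k (t+τ) - A k t : ℝ)):ℂ) * Complex.exp (((2*π*(φ k (t+τ)) : ℝ):ℂ) * Complex.I) +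
              ((A k t : ℝ):ℂ) * (Complex.exp (((2*π*(φ k (t+τ)) : ℝ):ℂ) * Complex.I) -
              Complex.exp (((2*π*(φ k t + deriv (φ k) t * τ) : ℝ):ℂ) * Complex.I)) by push_cast; ring]
            exact norm_add_le _ _
        _ ≤ ε1 * A k t * |τ| + π * ε2 * A k t * τ^2 := by
            rw [norm_mul, norm_mul, norm_cexp_real_I, mul_one, Complex.norm_real,
              Complex.norm_real, Real.norm_eq_abs, Real.norm_eq_abs]
            have h1 : |A k (t+τ) - A k t| ≤ ε1 * |τ| * A k t := hAlip k hk t τ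
            have h2 : ‖Complex.exp (((2*π*(φ k (t+τ)) : ℝ):ℂ) * Complex.I) -
                Complex.exp (((2*π*(φ k t + deriv (φ k) t * τ) : ℝ):ℂ) * Complex.I)‖ ≤
                |2*π*(φ k (t+τ)) - 2*π*(φ k t + deriv (φ k) t * τ)| := exp_I_lip _ _
            have h3 : |2*π*(φ k (t+τ)) - 2*π*(φ k t + deriv (φ k) t * τ)| ≤
                2*π*(ε2 * τ^2/2) := by
              rw [show 2*π*(φ k (t+τ)) - 2*π*(φ k t + deriv (φ k) t * τ) =
                2*π*(φ k (t+τ) - φ k t - deriv (φ k) t * τ) by ring, abs_mul,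
                abs_of_pos (by positivity : (0:ℝ) < 2*π)]
              exact mul_le_mul_of_nonneg_left (htay k hk τ) (by positivity)
            have h4 : |A k t| = A k t := abs_of_pos (hApos k hk t)
            have h5 : ‖Complex.exp (((2*π*(φ k (t+τ)) : ℝ):ℂ) * Complex.I)‖ = 1 :=
              norm_cexp_real_I _
            nlinarith [norm_nonneg (Complex.exp (((2*π*(φ k (t+τ)) : ℝ):ℂ) * Complex.I) -
              Complex.exp (((2*π*(φ k t + deriv (φ k) t * τ) : ℝ):ℂ) * Complex.I)),
              abs_nonneg (A k (t+τ) - A k t), Real.pi_pos, abs_nonneg τ,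
              (hApos k hk t), sq_nonneg τ]
      done
    -- integrate the bound
    have hbint : Integrable (fun τ : ℝ => (ε1 * A k t * |τ| + π * ε2 * A k t * τ^2) * w τ) := by
      have h1 := (int_abs_w hs).const_mul (ε1 * A k t)
      have h2 := (int_sq_w hs).const_mul (π * ε2 * A k t)
      refine ((h1.add h2).congr ?_ : Integrable _ _)
      filter_upwards with τ
      simp only [Pi.add_apply, hwdef]
      ring
    calc ‖∫ τ, (F k η τ - G τ)‖ ≤ ∫ τ, (ε1 * A k t * |τ| + π * ε2 * A k t * τ^2) * w τ :=
          MeasureTheory.norm_integral_le_of_norm_le hbint (Filter.Eventually.of_forall hptwise)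
      _ = lamf * A k t := by
          have hsplit : ∀ τ : ℝ, (ε1 * A k t * |τ| + π * ε2 * A k t * τ^2) * w τ =
              (ε1 * A k t) * (|τ| * w τ) + (π * ε2 * A k t) * (τ^2 * w τ) := by
            intro τ; ring
          simp_rw [hsplit]
          rw [MeasureTheory.integral_add
            ((int_abs_w hs).const_mul _)
            ((int_sq_w hs).const_mul _),
            MeasureTheory.integral_const_mul, MeasureTheory.integral_const_mul]
          rw [mom1_val hs, mom2_val hs, hlamf]
          ring
  -- separation
  have hsep2 : ∀ k, k ≤ K → k ≠ l → ∀ η : ℝ, |η - deriv (φ l) t| ≤ α/s →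
      (α*(2*|(l:ℝ)-(k:ℝ)|-1))^2 ≤ (s*(deriv (φ k) t - η))^2 ∧
      0 ≤ α*(2*|(l:ℝ)-(k:ℝ)|-1) := by
    intro k hk hkl η hη
    have hηlo : deriv (φ l) t - α/s ≤ η := by
      have := (abs_le.mp hη).1; linarith
    have hηhi : η ≤ deriv (φ l) t + α/s := by
      have := (abs_le.mp hη).2; linarith
    have hαs : 0 < α/s := div_pos hα hs
    rcases Nat.lt_or_ge k l with hckl | hckl
    · -- k < l
      have hL : (1:ℝ) ≤ (l:ℝ)-(k:ℝ) := by
        have : (k:ℝ) + 1 ≤ (l:ℝ) := by exact_mod_cast Nat.succ_le_of_lt hckl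
        linarith
      have habs : |(l:ℝ)-(k:ℝ)| = (l:ℝ)-(k:ℝ) := abs_of_pos (by linarith)
      have hc := hchain k l hl2 hckl
      have hkey : (2*((l:ℝ)-(k:ℝ))-1) * (α/s) ≤ η - deriv (φ k) t := by
        have he : ((l:ℝ)-(k:ℝ)) * (2*α/s) = 2*((l:ℝ)-(k:ℝ)) * (α/s) := by ring
        rw [he] at hc
        linarith
      have h0 : 0 ≤ α*(2*|(l:ℝ)-(k:ℝ)|-1) := by
        rw [habs]
        have : (1:ℝ) ≤ 2*((l:ℝ)-(k:ℝ))-1 := by linarith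
        nlinarith
      refine ⟨?_, h0⟩
      have hle : α*(2*|(l:ℝ)-(k:ℝ)|-1) ≤ s*(η - deriv (φ k) t) := by
        rw [habs]
        have h2 : s * ((2*((l:ℝ)-(k:ℝ))-1) * (α/s)) = α*(2*((l:ℝ)-(k:ℝ))-1) := by
          field_simp
        calc α*(2*((l:ℝ)-(k:ℝ))-1) = s * ((2*((l:ℝ)-(k:ℝ))-1) * (α/s)) := h2.symm
          _ ≤ s*(η - deriv (φ k) t) := by
              apply mul_le_mul_of_nonneg_left hkey hs.le
      calc (α*(2*|(l:ℝ)-(k:ℝ)|-1))^2 ≤ (s*(η - deriv (φ k) t))^2 := by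
            apply pow_le_pow_left₀ h0 hle
        _ = (s*(deriv (φ k) t - η))^2 := by ring
    · -- l < k
      have hlk : l < k := by omega
      have hL : (1:ℝ) ≤ (k:ℝ)-(l:ℝ) := by
        have : (l:ℝ) + 1 ≤ (k:ℝ) := by exact_mod_cast Nat.succ_le_of_lt hlk
        linarith
      have habs : |(l:ℝ)-(k:ℝ)| = (k:ℝ)-(l:ℝ) := by
        rw [abs_sub_comm]; exact abs_of_pos (by linarith)
      have hc := hchain l k hk hlk
      have hkey : (2*((k:ℝ)-(l:ℝ))-1) * (α/s) ≤ deriv (φ k) t - η := by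
        have he : ((k:ℝ)-(l:ℝ)) * (2*α/s) = 2*((k:ℝ)-(l:ℝ)) * (α/s) := by ring
        rw [he] at hc
        linarith
      have h0 : 0 ≤ α*(2*|(l:ℝ)-(k:ℝ)|-1) := by
        rw [habs]
        have : (1:ℝ) ≤ 2*((k:ℝ)-(l:ℝ))-1 := by linarith
        nlinarith
      refine ⟨?_, h0⟩
      have hle : α*(2*|(l:ℝ)-(k:ℝ)|-1) ≤ s*(deriv (φ k) t - η) := by
        rw [habs]
        have h2 : s * ((2*((k:ℝ)-(l:ℝ))-1) * (α/s)) = α*(2*((k:ℝ)-(l:ℝ))-1) := by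
          field_simp
        calc α*(2*((k:ℝ)-(l:ℝ))-1) = s * ((2*((k:ℝ)-(l:ℝ))-1) * (α/s)) := h2.symm
          _ ≤ s*(deriv (φ k) t - η) := by
              apply mul_le_mul_of_nonneg_left hkey hs.le
      exact pow_le_pow_left₀ h0 hle 2
  set E : ℝ := errG K A gauss0 σ α ε1 ε2 l t with hEdef
  have hmom2 : 0 ≤ momentI gauss0 2 := by
    unfold momentI
    apply MeasureTheory.integral_nonneg
    intro τ
    positivity
  have hEdecomp : E = lamf * Msum K A t +
      ∑ k ∈ (Finset.range (K + 1)).erase l,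
        A k t * Real.exp (-(2 * π ^ 2 * (α * (2 * |(l : ℝ) - (k : ℝ)| - 1)) ^ 2)) := by
    rw [hEdef]
    unfold errG
    rw [hlamf]
    ring
  have hVapprox : ∀ η : ℝ, |η - deriv (φ l) t| ≤ α/s →
      ‖aSTFT x gauss0 σ t η - mainv l η‖ ≤ E := by
    intro η hη
    rw [hVsum η]
    have hdecomp : (∑ k ∈ Finset.range (K+1), ∫ τ, F k η τ) - mainv l η =
        (∑ k ∈ Finset.range (K+1), ((∫ τ, F k η τ) - mainv k η)) +
        ∑ k ∈ (Finset.range (K+1)).erase l, mainv k η := by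
      rw [Finset.sum_sub_distrib]
      have h := (Finset.add_sum_erase _ (fun k => mainv k η) hlK).symm
      rw [h]
      ring
    rw [hdecomp]
    refine le_trans (norm_add_le _ _) ?_
    have h1 : ‖∑ k ∈ Finset.range (K+1), ((∫ τ, F k η τ) - mainv k η)‖ ≤ lamf * Msum K A t := by
      refine le_trans (norm_sum_le _ _) ?_
      unfold Msum
      rw [Finset.mul_sum]
      apply Finset.sum_le_sum
      intro k hk
      exact happk k (Finset.mem_range_succ_iff.mp hk) η
    have h2 : ‖∑ k ∈ (Finset.range (K+1)).erase l, mainv k η‖ ≤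
        ∑ k ∈ (Finset.range (K + 1)).erase l,
          A k t * Real.exp (-(2 * π ^ 2 * (α * (2 * |(l : ℝ) - (k : ℝ)| - 1)) ^ 2)) := by
      refine le_trans (norm_sum_le _ _) ?_
      apply Finset.sum_le_sum
      intro k hk
      have hkK : k ≤ K := Finset.mem_range_succ_iff.mp (Finset.mem_of_mem_erase hk)
      have hkl : k ≠ l := Finset.ne_of_mem_erase hk
      rw [hmainv_norm k hkK η]
      apply mul_le_mul_of_nonneg_left _ (hApos k hkK t).le
      apply Real.exp_le_exp.mpr
      have hs2 := (hsep2 k hkK hkl η hη).1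
      nlinarith [sq_nonneg π]
    rw [hEdecomp]
    linarith
  have hEpos : 0 < E := by
    rw [hEdecomp]
    have h1 : 0 < lamf * Msum K A t := by
      rw [hlamf]
      have h2 : 0 ≤ π * ε2 * momentI gauss0 2 * s^2 := by positivity
      have h3 : 0 < (ε1 * momentI gauss0 1 * s) * Msum K A t :=
        mul_pos (mul_pos (mul_pos hε1 mom1_pos) hs) hM
      nlinarith [mul_nonneg h2 hM.le]
    have h2 : 0 ≤ ∑ k ∈ (Finset.range (K + 1)).erase l,
        A k t * Real.exp (-(2 * π ^ 2 * (α * (2 * |(l : ℝ) - (k : ℝ)| - 1)) ^ 2)) := by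
      apply Finset.sum_nonneg
      intro k hk
      have hkK : k ≤ K := Finset.mem_range_succ_iff.mp (Finset.mem_of_mem_erase hk)
      exact mul_nonneg (hApos k hkK t).le (Real.exp_nonneg _)
    linarith
  have hElt : E < A l t / 4 := hErr l hl2
  have hAl : 0 < A l t := hApos l hl2 t
  -- lower bound at φ'_l
  have hmainv_at : ‖mainv l (deriv (φ l) t)‖ = A l t := by
    rw [hmainv_norm l hl2]
    simp
  have hlow : A l t - E ≤ ‖aSTFT x gauss0 σ t (deriv (φ l) t)‖ := by
    have h := hVapprox (deriv (φ l) t) (by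
      rw [sub_self, abs_zero]
      exact (div_pos hα hs).le)
    have h2 : ‖mainv l (deriv (φ l) t)‖ - ‖aSTFT x gauss0 σ t (deriv (φ l) t)‖ ≤
        ‖aSTFT x gauss0 σ t (deriv (φ l) t) - mainv l (deriv (φ l) t)‖ := by
      rw [norm_sub_rev]
      exact norm_sub_norm_le _ _
    rw [hmainv_at] at h2
    linarith
  -- exp bound by τ0
  have h2πα : 2*π^2*α^2 = Real.log τ0⁻¹ := by
    have hlogpos : 0 < Real.log τ0⁻¹ := Real.log_pos ((one_lt_inv₀ hτ0).mpr hτ0')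
    rw [hαdef, mul_pow, inv_pow, sq_sqrt (by linarith : (0:ℝ) ≤ 2 * Real.log τ0⁻¹)]
    have hπ : (π:ℝ) ≠ 0 := Real.pi_ne_zero
    field_simp
  have hexpτ0 : ∀ k, k ≠ l → k ≤ K →
      Real.exp (-(2*π^2*(α*(2*|(l:ℝ)-(k:ℝ)|-1))^2)) ≤ τ0 := by
    intro k hkl hkK
    have hge1 : (1:ℝ) ≤ |(l:ℝ)-(k:ℝ)| := by
      rcases Nat.lt_or_ge k l with h | h
      · have hkl' : (0:ℝ) < (l:ℝ) - (k:ℝ) := by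
          have : (k:ℝ) < (l:ℝ) := by exact_mod_cast h
          linarith
        rw [abs_of_pos hkl']
        have : (k:ℝ) + 1 ≤ (l:ℝ) := by exact_mod_cast Nat.succ_le_of_lt h
        linarith
      · have hlk : l < k := by omega
        have hkl' : (0:ℝ) < (k:ℝ) - (l:ℝ) := by
          have : (l:ℝ) < (k:ℝ) := by exact_mod_cast hlk
          linarith
        rw [abs_sub_comm, abs_of_pos hkl']
        have : (l:ℝ) + 1 ≤ (k:ℝ) := by exact_mod_cast Nat.succ_le_of_lt hlk
        linarith
    have hc : (1:ℝ) ≤ 2*|(l:ℝ)-(k:ℝ)|-1 := by linarith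
    have hmono : 2*π^2*α^2 ≤ 2*π^2*(α*(2*|(l:ℝ)-(k:ℝ)|-1))^2 := by
      have hc2 : (1:ℝ) ≤ (2*|(l:ℝ)-(k:ℝ)|-1)^2 := by nlinarith
      have h' : α^2 ≤ (α*(2*|(l:ℝ)-(k:ℝ)|-1))^2 := by
        rw [mul_pow]
        exact le_mul_of_one_le_right (sq_nonneg α) hc2
      exact mul_le_mul_of_nonneg_left h' (by positivity)
    calc Real.exp (-(2*π^2*(α*(2*|(l:ℝ)-(k:ℝ)|-1))^2)) ≤ Real.exp (-(2*π^2*α^2)) :=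
          Real.exp_le_exp.mpr (by linarith)
      _ = τ0 := by
          rw [h2πα, Real.exp_neg, Real.exp_log (inv_pos.mpr hτ0), inv_inv]
  have hEbound : E ≤ Msum K A t * lamf + τ0 * (Msum K A t - A l t) := by
    rw [hEdecomp]
    have hsum : ∑ k ∈ (Finset.range (K + 1)).erase l,
        A k t * Real.exp (-(2 * π ^ 2 * (α * (2 * |(l : ℝ) - (k : ℝ)| - 1)) ^ 2)) ≤
        ∑ k ∈ (Finset.range (K + 1)).erase l, A k t * τ0 := by
      apply Finset.sum_le_sum
      intro k hk
      have hkK : k ≤ K := Finset.mem_range_succ_iff.mp (Finset.mem_of_mem_erase hk)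
      exact mul_le_mul_of_nonneg_left
        (hexpτ0 k (Finset.ne_of_mem_erase hk) hkK) (hApos k hkK t).le
    have hsum2 : ∑ k ∈ (Finset.range (K + 1)).erase l, A k t * τ0 =
        τ0 * (Msum K A t - A l t) := by
      rw [← Finset.sum_mul, Finset.sum_erase_eq_sub hlK]
      unfold Msum
      ring
    rw [hsum2] at hsum
    linarith
  -- φ'_l belongs to Gtk
  have hmem : deriv (φ l) t ∈ Gtk x gauss0 σ φ α t epst l := by
    refine ⟨?_, ?_⟩
    · show epst < ‖aSTFT x gauss0 σ t (deriv (φ l) t)‖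
      have hμl := hμle l hl2
      have hlam0 : lam0 gauss0 σ ε1 ε2 t = lamf := rfl
      rw [hlam0] at heps2
      have e1 : Msum K A t * (τ0 + lamf) = Msum K A t * τ0 + Msum K A t * lamf := by ring
      have e2 : τ0 * (Msum K A t - A l t) = τ0 * Msum K A t - τ0 * A l t := by ring
      have e3 : Msum K A t * τ0 = τ0 * Msum K A t := by ring
      have hτA : 0 < τ0 * A l t := mul_pos hτ0 hAl
      linarith [hlow]
    · show |deriv (φ l) t - deriv (φ l) t| < α / s
      rw [sub_self, abs_zero]
      exact div_pos hα hs
  -- upper bound at ηhat l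
  have hup : ‖aSTFT x gauss0 σ t (ηhat l)‖ ≤
      A l t * Real.exp (-(2*π^2*(s*(deriv (φ l) t - ηhat l))^2)) + E := by
    have hηin := hηmem l hl1 hl2
    have hηdist : |ηhat l - deriv (φ l) t| ≤ α/s := hηin.2.le
    have h := hVapprox (ηhat l) hηdist
    calc ‖aSTFT x gauss0 σ t (ηhat l)‖
        = ‖(aSTFT x gauss0 σ t (ηhat l) - mainv l (ηhat l)) + mainv l (ηhat l)‖ := by
          rw [sub_add_cancel]
      _ ≤ ‖aSTFT x gauss0 σ t (ηhat l) - mainv l (ηhat l)‖ + ‖mainv l (ηhat l)‖ :=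
          norm_add_le _ _
      _ ≤ A l t * Real.exp (-(2*π^2*(s*(deriv (φ l) t - ηhat l))^2)) + E := by
          rw [hmainv_norm l hl2]
          linarith
  -- final computation
  have hmax := hηmax l hl1 hl2 (deriv (φ l) t) hmem
  set D : ℝ := ηhat l - deriv (φ l) t with hD
  set X : ℝ := 2*π^2*(s*(deriv (φ l) t - ηhat l))^2 with hX
  have hXeq : X = 2*π^2*s^2*D^2 := by rw [hX, hD]; ring
  have hX0 : 0 ≤ X := by rw [hX]; positivity
  have hchain2 : A l t - E ≤ A l t * Real.exp (-X) + E := by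
    calc A l t - E ≤ ‖aSTFT x gauss0 σ t (deriv (φ l) t)‖ := hlow
      _ ≤ ‖aSTFT x gauss0 σ t (ηhat l)‖ := hmax
      _ ≤ A l t * Real.exp (-X) + E := hup
  have hp : (0:ℝ) < 1+X := by linarith
  have hinv : Real.exp (-X) ≤ (1+X)⁻¹ := by
    rw [Real.exp_neg]
    have h1 : 1+X ≤ Real.exp X := by linarith [Real.add_one_le_exp X]
    exact inv_anti₀ hp h1
  have hhalf : (1:ℝ)/2 < Real.exp (-X) := by
    have h1 : A l t * (1/2) < A l t * Real.exp (-X) := by nlinarith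
    exact (mul_lt_mul_iff_right₀ hAl).mp h1
  have hXlt1 : X < 1 := by
    have h1 : (1:ℝ)/2 < (1+X)⁻¹ := lt_of_lt_of_le hhalf hinv
    have h2 := mul_lt_mul_of_pos_left h1 hp
    rw [mul_inv_cancel₀ hp.ne'] at h2
    linarith
  have hfrac : A l t * (X*(1+X)⁻¹) ≤ 2*E := by
    have he : X*(1+X)⁻¹ = 1 - (1+X)⁻¹ := by field_simp; ring
    have h1 : 1 - (1+X)⁻¹ ≤ 1 - Real.exp (-X) := by linarith
    have e2 : A l t * (1 - Real.exp (-X)) = A l t - A l t * Real.exp (-X) := by ring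
    have h2 : A l t * (1 - Real.exp (-X)) ≤ 2*E := by linarith
    calc A l t * (X*(1+X)⁻¹) = A l t * (1-(1+X)⁻¹) := by rw [he]
      _ ≤ A l t * (1 - Real.exp (-X)) := mul_le_mul_of_nonneg_left h1 hAl.le
      _ ≤ 2*E := h2
  have hXA : X * A l t < 4 * E := by
    have h1 : A l t * (X*(1+X)⁻¹) * (1+X) ≤ 2*E*(1+X) := mul_le_mul_of_nonneg_right hfrac hp.le
    have h2 : A l t * (X*(1+X)⁻¹) * (1+X) = X * A l t := by field_simp
    have h3 : 2*E*(1+X) < 2*E*2 := by nlinarith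
    linarith
  -- conclude
  rw [show Real.sqrt 2/(s*π) * Real.sqrt (E/A l t) = Real.sqrt (2*(E/A l t))/(s*π) by
    rw [Real.sqrt_mul (by norm_num : (0:ℝ) ≤ 2)]; ring]
  rw [lt_div_iff₀ (by positivity : (0:ℝ) < s*π)]
  apply (Real.lt_sqrt (by positivity)).mpr
  have hsq : (|D| * (s*π))^2 = D^2*s^2*π^2 := by rw [mul_pow, mul_pow, sq_abs]; ring
  rw [hsq, show 2*(E/A l t) = (2*E)/A l t by ring, lt_div_iff₀ hAl]
  have heq : X*A l t = 2*(D^2*s^2*π^2*A l t) := by rw [hXeq]; ring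
  linarith
end
end
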